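/- arXiv:2003.07613 — 8 statements merged into one kernel-verified Lean document; each statement's English description precedes it below -/
import Mathlib

section
/- For every T ∈ (0,4), γ ∈ (−1,1], and u ∈ (0,1), the inequality √((1+γu)² − γTu)/√((1−u)² + Tu) ≤ ((1+γ)/2)·(1+u)/√((1−u)² + Tu) + (1−γ)/2 holds. -/
theorem stmt_4 (T γ u : ℝ) (hT : T ∈ Set.Ioo (0:ℝ) 4) (hγ : γ ∈ Set.Ioc (-1:ℝ) 1)
    (hu : u ∈ Set.Ioo (0:ℝ) 1) :
    Real.sqrt ((1 + γ*u)^2 - γ*T*u) / Real.sqrt ((1 - u)^2 + T*u) ≤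
      (1 + γ)/2 * ((1 + u) / Real.sqrt ((1 - u)^2 + T*u)) + (1 - γ)/2 := by
  obtain ⟨hT0, hT4⟩ := hT
  obtain ⟨hγ1, hγ2⟩ := hγ
  obtain ⟨hu0, hu1⟩ := hu
  have hDpos : 0 < (1 - u)^2 + T*u := by nlinarith [sq_nonneg (1-u), mul_pos hT0 hu0]
  set s := Real.sqrt ((1 - u)^2 + T*u) with hs_def
  have hs : 0 < s := Real.sqrt_pos.mpr hDpos
  have hsq : s ^ 2 = (1 - u)^2 + T*u := Real.sq_sqrt hDpos.le
  have hs1 : 1 - u ≤ s := by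
    nlinarith [hsq, hs, mul_pos hT0 hu0]
  have hR : 0 ≤ (1+γ)/2*(1+u) + (1-γ)/2*s := by nlinarith
  have key : Real.sqrt ((1 + γ*u)^2 - γ*T*u) ≤ (1+γ)/2*(1+u) + (1-γ)/2*s := by
    have h2 : (1 + γ*u)^2 - γ*T*u ≤ ((1+γ)/2*(1+u) + (1-γ)/2*s)^2 := by
      have hAB : (0:ℝ) ≤ (1+γ)/2*((1-γ)/2)*(1+u) :=
        mul_nonneg (mul_nonneg (by linarith) (by linarith)) (by linarith)
      nlinarith [mul_nonneg (mul_pos hT0 hu0).le (sq_nonneg (1+γ)), hsq, hs1,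
        mul_nonneg hAB (by linarith : (0:ℝ) ≤ s - (1-u))]
    calc Real.sqrt ((1 + γ*u)^2 - γ*T*u) ≤ Real.sqrt (((1+γ)/2*(1+u) + (1-γ)/2*s)^2) :=
          Real.sqrt_le_sqrt h2
      _ = (1+γ)/2*(1+u) + (1-γ)/2*s := Real.sqrt_sq hR
  have hdiv : Real.sqrt ((1 + γ*u)^2 - γ*T*u) / s ≤ ((1+γ)/2*(1+u) + (1-γ)/2*s) / s := by
    gcongr
  calc Real.sqrt ((1 + γ*u)^2 - γ*T*u) / s ≤ ((1+γ)/2*(1+u) + (1-γ)/2*s) / s := hdiv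
    _ = (1 + γ)/2 * ((1 + u) / s) + (1 - γ)/2 := by
        field_simp
end

section
/- For every b ∈ (0,1), u ∈ (0,1), and T ∈ (0,4), the inequality (1/(1+b))·[ √((1−bu)² + bTu) − (1−bu) ] ≤ (1/2)·[ √((1−u)² + Tu) − (1−u) ] holds. -/
theorem stmt_5 (b u T : ℝ) (hb : b ∈ Set.Ioo (0:ℝ) 1) (hu : u ∈ Set.Ioo (0:ℝ) 1)
    (hT : T ∈ Set.Ioo (0:ℝ) 4) :
    (1/(1 + b)) * (Real.sqrt ((1 - b*u)^2 + b*T*u) - (1 - b*u)) ≤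
      (1/2) * (Real.sqrt ((1 - u)^2 + T*u) - (1 - u)) := by
  obtain ⟨hb0, hb1⟩ := hb
  obtain ⟨hu0, hu1⟩ := hu
  obtain ⟨hT0, hT4⟩ := hT
  set A := Real.sqrt ((1 - b*u)^2 + b*T*u) with hAdef
  set B := Real.sqrt ((1 - u)^2 + T*u) with hBdef
  have hTu : (0:ℝ) < T*u := mul_pos hT0 hu0
  have hbu : 0 < 1 - b*u := by nlinarith
  have hu1' : 0 < 1 - u := by linarith
  have hA2 : A^2 = (1 - b*u)^2 + b*T*u := Real.sq_sqrt (by nlinarith)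
  have hB2 : B^2 = (1 - u)^2 + T*u := Real.sq_sqrt (by nlinarith)
  have hApos : 0 < A := Real.sqrt_pos.mpr (by nlinarith)
  have hBpos : 0 < B := Real.sqrt_pos.mpr (by nlinarith)
  have key : 2*b*B ≤ (1+b)*A := by
    have e1 : (0:ℝ) ≤ (1-b)*(1+b*u) := mul_nonneg (by linarith) (by nlinarith [mul_pos hb0 hu0])
    have e2 : (0:ℝ) ≤ (1+b)*(1-b*u) + 2*b*(1-u) := by nlinarith
    have h1 : (2*b*B)^2 ≤ ((1+b)*A)^2 := by
      nlinarith [mul_nonneg e1 e2, mul_nonneg (mul_nonneg hb0.le hTu.le) (sq_nonneg (1-b))]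
    have h2 := Real.sqrt_le_sqrt h1
    rwa [Real.sqrt_sq (by positivity), Real.sqrt_sq (by positivity)] at h2
  have key2 : 0 ≤ (1+b)*(A + (1 - b*u)) - 2*b*(B + (1-u)) := by
    nlinarith [mul_nonneg (by linarith : (0:ℝ) ≤ 1-b) (by nlinarith [mul_pos hb0 hu0] : (0:ℝ) ≤ 1+b*u)]
  have hs : 0 < A + (1 - b*u) := by linarith
  have ht : 0 < B + (1 - u) := by linarith
  rw [show (1/(1+b)) * (A - (1-b*u)) = (A - (1-b*u))/(1+b) by ring,
    show (1/2) * (B - (1-u)) = (B - (1-u))/2 by ring,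
    div_le_div_iff₀ (by linarith) (by norm_num)]
  nlinarith [mul_pos hs ht, mul_nonneg key2 hTu.le, hA2, hB2,
    mul_pos hApos hBpos]
end

section
/- Let γ ∈ (−1,1] and S, T ∈ (0,4), and set a := T/S. With I(S,T) as defined below, one has I(S,T) ≤ ((1+γ)/2) · ∫₀^∞ (a + w)^{−(1+γ)/2} · (√(1+w) − 1)/(1+w) · w^{−(1−γ)/2} dw. -/
open MeasureTheory

lemma claimC (γ u : ℝ) (hγ1 : -1 < γ) (hγ2 : γ ≤ 1) (hu0 : 0 ≤ u) (hu1 : u ≤ 1) :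
    (1+γ)*u*((1+γ)+(1-γ)*u) ≤ (1+u)*(1+γ*u) := by
  nlinarith [mul_nonneg (sub_nonneg.2 hu1) (mul_nonneg hu0 (mul_nonneg (sub_nonneg.2 hγ2) (by linarith : (0:ℝ) ≤ γ + 2))), mul_nonneg (sub_nonneg.2 hu1) hu0, sq_nonneg u]

lemma lemM2 (γ T u : ℝ) (hγ1 : -1 < γ) (hγ2 : γ ≤ 1) (hu0 : 0 ≤ u) (hu1 : u ≤ 1)
    (hT0 : 0 < T) (hT4 : T < 4) :
    ((1+γ)/2)*u*((1+γ)/2+(1-(1+γ)/2)*u)*(4-T)*(1-u) ≤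
      (1+u)*(1 - γ*u^2 - (1-γ)*(1-T/2)*u) := by
  have hC := claimC γ u hγ1 hγ2 hu0 hu1
  nlinarith [mul_nonneg (sub_nonneg.2 hC) (sub_nonneg.2 hu1),
    mul_nonneg (mul_nonneg hT0.le hu0) (sub_nonneg.2 hγ2),
    mul_nonneg (mul_nonneg hT0.le (mul_nonneg hu0 hu0)) (mul_nonneg (sub_nonneg.2 hγ2) (by linarith : (0:ℝ) ≤ 1+γ)),
    mul_nonneg hT0.le (mul_nonneg (sub_nonneg.2 hu1) (mul_nonneg hu0 (by linarith : (0:ℝ) ≤ 1+γ)))]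

lemma lemM1poly (γ T u : ℝ) (hγ1 : -1 < γ) (hγ2 : γ ≤ 1) (hu0 : 0 ≤ u) (hu1 : u ≤ 1)
    (hT0 : 0 < T) (hT4 : T < 4) :
    (((1+γ)/2)*u*((1+γ)/2+(1-(1+γ)/2)*u)*(4-T))^2 ≤ (1+u)^2*((1+γ*u)^2 - γ*T*u) := by
  have hC := claimC γ u hγ1 hγ2 hu0 hu1
  have hq0 : 0 ≤ (1+γ)*u*((1+γ)+(1-γ)*u) :=
    mul_nonneg (mul_nonneg (by linarith) hu0) (by nlinarith)
  have hm0 : (0:ℝ) ≤ (1+u)*(1+γ*u) := by nlinarith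
  have hsq : ((1+γ)*u*((1+γ)+(1-γ)*u))^2 ≤ ((1+u)*(1+γ*u))^2 :=
    by nlinarith [mul_self_le_mul_self hq0 hC]
  have hkey : 16*(γ*u) ≤ (1+γ*u)^2*(8-T) := by
    rcases le_or_gt (γ*u) 0 with h | h
    · nlinarith [sq_nonneg (1+γ*u)]
    · nlinarith [sq_nonneg (1-γ*u), mul_nonneg (sq_nonneg (1+γ*u)) (by linarith : (0:ℝ) ≤ 4 - T)]
  nlinarith [hsq, mul_le_mul_of_nonneg_right hsq (sq_nonneg (4-T)),
    mul_nonneg (mul_nonneg hT0.le (sq_nonneg (1+u))) (sub_nonneg.2 hkey)]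

set_option maxHeartbeats 1000000 in
lemma keyPointwise (γ T u : ℝ) (hγ1 : -1 < γ) (hγ2 : γ ≤ 1) (hu0 : 0 < u) (hu1 : u < 1)
    (hT0 : 0 < T) (hT4 : T < 4) :
    Real.sqrt ((1 + γ*u)^2 - γ*T*u) / Real.sqrt ((1 - u)^2 + T*u)
      - (1 - γ*u^2 - (1 - γ)*(1 - T/2)*u)/((1 - u)^2 + T*u)
    ≤ (1+γ)/2 * u ^ ((1+γ)/2 - 1) * (1+u) * (Real.sqrt ((1 - u)^2 + T*u) - (1-u))
        / ((1 - u)^2 + T*u) := by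
  set p : ℝ := (1+γ)/2 with hpdef
  have hp0 : 0 < p := by simp only [hpdef]; linarith
  have hp1 : p ≤ 1 := by simp only [hpdef]; linarith
  set A : ℝ := (1 + γ*u)^2 - γ*T*u with hAdef
  set D : ℝ := (1 - u)^2 + T*u with hDdef
  set N : ℝ := 1 - γ*u^2 - (1 - γ)*(1 - T/2)*u with hNdef
  have hD : 0 < D := by positivity
  have hA : 0 ≤ A := by
    rw [hAdef]
    rcases le_or_gt γ 0 with h | h
    · have h2 : 0 ≤ -γ*T*u := mul_nonneg (mul_nonneg (neg_nonneg.2 h) hT0.le) hu0.le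
      nlinarith [sq_nonneg (1+γ*u)]
    · nlinarith [sq_nonneg (1-γ*u), mul_nonneg (mul_nonneg h.le (sub_nonneg.2 hT4.le)) hu0.le]
  have hN : 0 < N := by
    rw [hNdef]
    nlinarith [mul_pos (sub_pos.2 hu1) (show 0 < 1+γ*u by nlinarith),
      mul_nonneg (mul_nonneg (sub_nonneg.2 hγ2) hT0.le) hu0.le]
  have hsD : 0 < Real.sqrt D := Real.sqrt_pos.2 hD
  have hsA : 0 ≤ Real.sqrt A := Real.sqrt_nonneg A
  set X : ℝ := Real.sqrt A * Real.sqrt D with hXdef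
  have hXX : X^2 = A*D := by
    rw [hXdef, mul_pow, Real.sq_sqrt hA, Real.sq_sqrt hD.le]
  have hX0 : 0 ≤ X := mul_nonneg hsA hsD.le
  have e1 : Real.sqrt A / Real.sqrt D = X / D := by
    rw [div_eq_div_iff hsD.ne' hD.ne', hXdef, mul_assoc, Real.mul_self_sqrt hD.le]
  rw [e1, div_sub_div_same, div_le_div_iff_of_pos_right hD]
  set z : ℝ := u ^ (p - 1) with hzdef
  have hz0 : 0 < z := Real.rpow_pos_of_pos hu0 _
  have hBern : 1 ≤ z * (p + (1-p)*u) := by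
    have h1 : u ^ (1-p) ≤ p + (1-p)*u := by
      have := Real.geom_mean_le_arith_mean2_weighted (le_of_lt hp0) (by linarith : (0:ℝ) ≤ 1-p)
        zero_le_one hu0.le (by ring)
      simpa using this
    have h2 : z * u ^ (1-p) = 1 := by
      rw [hzdef, ← Real.rpow_add hu0]
      norm_num
    calc (1:ℝ) = z * u ^ (1-p) := h2.symm
      _ ≤ z * (p + (1-p)*u) := by
          exact mul_le_mul_of_nonneg_left h1 hz0.le
  set q : ℝ := p*u*(p+(1-p)*u) with hqdef
  have hq0 : 0 < q := by
    have : 0 < p + (1-p)*u := by nlinarith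
    positivity
  set t : ℝ := Real.sqrt D + (1-u) with htdef
  have ht0 : 0 < t := by
    have : 0 ≤ 1 - u := by linarith
    positivity
  have hM : q*(4-T)*t ≤ (1+u)*(X+N) := by
    have hM1' : q*(4-T) ≤ (1+u)*Real.sqrt A := by
      have h1 : (1+u)*Real.sqrt A = Real.sqrt ((1+u)^2*A) := by
        rw [Real.sqrt_mul (sq_nonneg _), Real.sqrt_sq (by linarith)]
      rw [h1]
      rw [show q*(4-T) = p*u*(p+(1-p)*u)*(4-T) from rfl]
      refine (Real.le_sqrt (by nlinarith [hq0.le] : (0:ℝ) ≤ p*u*(p+(1-p)*u)*(4-T)) (by positivity)).2 ?_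
      have := lemM1poly γ T u hγ1 hγ2 hu0.le hu1.le hT0 hT4
      calc (p*u*(p+(1-p)*u)*(4-T))^2 = (((1+γ)/2)*u*((1+γ)/2+(1-(1+γ)/2)*u)*(4-T))^2 := by
            rw [hpdef]
        _ ≤ (1+u)^2*((1+γ*u)^2 - γ*T*u) := this
        _ = (1+u)^2*A := by rw [hAdef]
    have hM2' : q*(4-T)*(1-u) ≤ (1+u)*N := by
      have := lemM2 γ T u hγ1 hγ2 hu0.le hu1.le hT0 hT4
      calc q*(4-T)*(1-u) = ((1+γ)/2)*u*((1+γ)/2+(1-(1+γ)/2)*u)*(4-T)*(1-u) := by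
            rw [hqdef, hpdef]
        _ ≤ (1+u)*(1 - γ*u^2 - (1-γ)*(1-T/2)*u) := this
        _ = (1+u)*N := by rw [hNdef]
    calc q*(4-T)*t = q*(4-T)*Real.sqrt D + q*(4-T)*(1-u) := by rw [htdef]; ring
      _ ≤ (1+u)*Real.sqrt A*Real.sqrt D + (1+u)*N := by
          exact add_le_add (mul_le_mul_of_nonneg_right hM1' hsD.le) hM2'
      _ = (1+u)*(X+N) := by rw [hXdef]; ring
  have hXN : 0 < X + N := by positivity
  have hc : (X - N)*(X + N) = p^2*u^2*T*(4-T) := by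
    have : X^2 - N^2 = p^2*u^2*T*(4-T) := by
      rw [hXX, hAdef, hDdef, hNdef, hpdef]; ring
    nlinarith [this]
  have hd : (Real.sqrt D - (1-u))*t = T*u := by
    have : (Real.sqrt D)^2 - (1-u)^2 = T*u := by rw [Real.sq_sqrt hD.le, hDdef]; ring
    rw [htdef]; nlinarith [this]
  have hfinal : (X - N) * ((X+N)*t) ≤ (p * z * (1+u) * (Real.sqrt D - (1-u))) * ((X+N)*t) := by
    have lhs_eq : (X - N) * ((X+N)*t) = (p^2*u^2*T*(4-T))*t := by
      rw [← mul_assoc, hc]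
    have rhs_eq : (p * z * (1+u) * (Real.sqrt D - (1-u))) * ((X+N)*t)
        = p * z * (1+u) * (T*u) * (X+N) := by
      rw [show (p * z * (1+u) * (Real.sqrt D - (1-u))) * ((X+N)*t)
          = p * z * (1+u) * ((Real.sqrt D - (1-u))*t) * (X+N) by ring, hd]
    rw [lhs_eq, rhs_eq]
    have step1 : p*T*u*z*(q*(4-T)*t) ≤ p*T*u*z*((1+u)*(X+N)) :=
      mul_le_mul_of_nonneg_left hM
        (mul_nonneg (mul_nonneg (mul_nonneg hp0.le hT0.le) hu0.le) hz0.le)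
    have step2 : (p^2*u^2*T*(4-T))*t*1 ≤ (p^2*u^2*T*(4-T))*t*(z*(p+(1-p)*u)) :=
      mul_le_mul_of_nonneg_left hBern
        (mul_nonneg (mul_nonneg (mul_nonneg (mul_nonneg (sq_nonneg p) (sq_nonneg u)) hT0.le)
          (by linarith : (0:ℝ) ≤ 4 - T)) ht0.le)
    have e2 : (p^2*u^2*T*(4-T))*t*(z*(p+(1-p)*u)) = p*T*u*z*(q*(4-T)*t) := by
      rw [hqdef]; ring
    have e3 : p*T*u*z*((1+u)*(X+N)) = p * z * (1+u) * (T*u) * (X+N) := by ring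
    calc (p^2*u^2*T*(4-T))*t = (p^2*u^2*T*(4-T))*t*1 := by ring
      _ ≤ p*T*u*z*(q*(4-T)*t) := by rw [← e2]; exact step2
      _ ≤ p * z * (1+u) * (T*u) * (X+N) := by rw [← e3]; exact step1
  have := le_of_mul_le_mul_right hfinal (by positivity : (0:ℝ) < (X+N)*t)
  calc X - N ≤ p * z * (1+u) * (Real.sqrt D - (1-u)) := this
    _ = p * u^(p-1) * (1+u) * (Real.sqrt D - (1-u)) := by rw [hzdef]

lemma phi_deriv (T u : ℝ) (hu1 : u ≠ 1) :
    HasDerivAt (fun x : ℝ => T*x/(1-x)^2) (T*(1+u)/(1-u)^3) u := by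
  have h1 : HasDerivAt (fun x : ℝ => T*x) T u := by
    simpa using (hasDerivAt_id u).const_mul T
  have h2 : HasDerivAt (fun x : ℝ => (1-x)^2) ((2:ℕ)*(1-u)^1*(-1)) u := by
    exact (((hasDerivAt_id u).const_sub 1).pow 2)
  have hne : ((1:ℝ)-u)^2 ≠ 0 := pow_ne_zero _ (sub_ne_zero.2 (Ne.symm hu1))
  have := h1.div h2 hne
  refine this.congr_deriv ?_
  have h1u : (1:ℝ) - u ≠ 0 := sub_ne_zero.2 (Ne.symm hu1)
  rw [div_eq_div_iff (pow_ne_zero _ (pow_ne_zero _ h1u)) (pow_ne_zero _ h1u)]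
  push_cast
  ring

lemma phi_inj (T : ℝ) (hT : 0 < T) : Set.InjOn (fun x : ℝ => T*x/(1-x)^2) (Set.Ioo 0 1) := by
  rintro x ⟨hx0, hx1⟩ y ⟨hy0, hy1⟩ h
  simp only at h
  have hx : ((1:ℝ)-x)^2 ≠ 0 := pow_ne_zero _ (by linarith)
  have hy : ((1:ℝ)-y)^2 ≠ 0 := pow_ne_zero _ (by linarith)
  field_simp at h
  have h2 : (x - y) * (1 - x*y) = 0 := by nlinarith [h]
  rcases mul_eq_zero.1 h2 with h3 | h3
  · linarith [sub_eq_zero.1 h3]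
  · nlinarith

lemma phi_image (T : ℝ) (hT : 0 < T) :
    (fun x : ℝ => T*x/(1-x)^2) '' (Set.Ioo 0 1) = Set.Ioi 0 := by
  apply Set.eq_of_subset_of_subset
  · rintro w ⟨x, ⟨hx0, hx1⟩, rfl⟩
    have h2 : (0:ℝ) < (1-x)^2 := pow_pos (by linarith) 2
    exact Set.mem_Ioi.2 (div_pos (mul_pos hT hx0) h2)
  · rintro w hw
    rw [Set.mem_Ioi] at hw
    set s : ℝ := Real.sqrt (T*(T+4*w)) with hs
    have hs0 : 0 < s := Real.sqrt_pos.2 (by positivity)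
    have hs2 : s^2 = T*(T+4*w) := Real.sq_sqrt (by positivity)
    have hslt : s < 2*w + T := by
      have : s < Real.sqrt ((2*w+T)^2) := by
        apply Real.sqrt_lt_sqrt (by positivity)
        nlinarith
      rwa [Real.sqrt_sq (by positivity)] at this
    have hsgt : T < s := by
      have : Real.sqrt (T^2) < s := by
        apply Real.sqrt_lt_sqrt (by positivity)
        nlinarith
      rwa [Real.sqrt_sq hT.le] at this
    refine ⟨(2*w + T - s)/(2*w), ⟨div_pos (by linarith) (by positivity), ?_⟩, ?_⟩
    · rw [div_lt_one (by positivity)]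
      linarith
    · have hu1 : (1:ℝ) - (2*w + T - s)/(2*w) = (s - T)/(2*w) := by
        field_simp
        ring
      simp only [hu1]
      have hst : s - T ≠ 0 := by linarith
      have hw2 : ((2:ℝ)*w) ≠ 0 := by positivity
      field_simp
      nlinarith [hs2]

set_option maxHeartbeats 1000000 in
lemma cov_algebra (γ S T u : ℝ) (hγ1 : -1 < γ) (hS0 : 0 < S) (hT0 : 0 < T)
    (hu0 : 0 < u) (hu1 : u < 1) :
    |T*(1+u)/(1-u)^3| *
      ((T/S + T*u/(1-u)^2) ^ (-(1+γ)/2) *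
        ((Real.sqrt (1 + T*u/(1-u)^2) - 1)/(1 + T*u/(1-u)^2)) *
        (T*u/(1-u)^2) ^ (-(1-γ)/2))
    = (S/((1-u)^2 + S*u)) ^ ((1+γ)/2) *
        (u ^ ((1+γ)/2 - 1) * (1+u) * (Real.sqrt ((1-u)^2 + T*u) - (1-u)) / ((1-u)^2 + T*u)) := by
  set p : ℝ := (1+γ)/2 with hpdef
  have hp0 : 0 < p := by simp only [hpdef]; linarith
  have hv0 : 0 < 1 - u := by linarith
  have hv2 : (0:ℝ) < (1-u)^2 := pow_pos hv0 2
  set Ds : ℝ := (1-u)^2 + S*u with hDs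
  set D : ℝ := (1-u)^2 + T*u with hD
  have hDs0 : 0 < Ds := by positivity
  have hD0 : 0 < D := by positivity
  have habs : |T*(1+u)/(1-u)^3| = T*(1+u)/(1-u)^3 := abs_of_pos (by positivity)
  have hexp2 : -(1-γ)/2 = p - 1 := by rw [hpdef]; ring
  have hexp1 : -(1+γ)/2 = -p := by rw [hpdef]; ring
  have e1 : T/S + T*u/(1-u)^2 = T*Ds/(S*(1-u)^2) := by
    rw [hDs]; field_simp
  have e2 : 1 + T*u/(1-u)^2 = D/(1-u)^2 := by
    rw [hD]; field_simp
  have F1 : (T/S + T*u/(1-u)^2) ^ (-(1+γ)/2) = (S^p * ((1-u)^2)^p)/(T^p * Ds^p) := by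
    rw [hexp1, e1, Real.rpow_neg (by positivity), Real.div_rpow (by positivity) (by positivity),
      Real.mul_rpow hT0.le hDs0.le, Real.mul_rpow hS0.le hv2.le]
    rw [inv_div]
  have F2 : (Real.sqrt (1 + T*u/(1-u)^2) - 1)/(1 + T*u/(1-u)^2)
      = (Real.sqrt D - (1-u)) * (1-u) / D := by
    rw [e2, Real.sqrt_div hD0.le, Real.sqrt_sq hv0.le]
    rw [div_eq_div_iff (by positivity) hD0.ne']
    field_simp
  have F3 : (T*u/(1-u)^2) ^ (-(1-γ)/2) = T^(p-1) * u^(p-1) / ((1-u)^2)^(p-1) := by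
    rw [hexp2, Real.div_rpow (by positivity) hv2.le, Real.mul_rpow hT0.le hu0.le]
  rw [habs, F1, F2, F3]
  rw [Real.div_rpow hS0.le hDs0.le]
  have hT1 : T^p = T^(p-1) * T := by
    rw [show p = p-1+1 by ring, Real.rpow_add_one hT0.ne']
    ring_nf
  have hv1 : ((1-u)^2)^p = ((1-u)^2)^(p-1) * (1-u)^2 := by
    rw [show p = p-1+1 by ring, Real.rpow_add_one hv2.ne']
    ring_nf
  rw [hT1, hv1]
  have h1 : T^(p-1) ≠ 0 := by positivity
  have h2 : ((1-u)^2)^(p-1) ≠ 0 := by positivity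
  have h3 : Ds^p ≠ 0 := by positivity
  have h4 : S^p ≠ 0 := by positivity
  have h5 : u^(p-1) ≠ 0 := by positivity
  field_simp

lemma bound_contOn (γ S T : ℝ) (hγ1 : -1 < γ) (hS0 : 0 < S) (hT0 : 0 < T) (hT4 : T < 4) :
    ContinuousOn (fun u : ℝ => (S/((1-u)^2 + S*u)) ^ ((1+γ)/2) *
      ((1+γ)/2 * u ^ ((1+γ)/2 - 1) * (1+u) * (Real.sqrt ((1-u)^2 + T*u) - (1-u))
        / ((1-u)^2 + T*u))) (Set.Ioo 0 1) := by
  have hden : ∀ u ∈ Set.Ioo (0:ℝ) 1, (1-u)^2 + S*u ≠ 0 := by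
    rintro u ⟨h0, h1⟩
    have : (0:ℝ) < (1-u)^2 + S*u := by positivity
    exact this.ne'
  have hden2 : ∀ u ∈ Set.Ioo (0:ℝ) 1, (1-u)^2 + T*u ≠ 0 := by
    rintro u ⟨h0, h1⟩
    have : (0:ℝ) < (1-u)^2 + T*u := by positivity
    exact this.ne'
  apply ContinuousOn.mul
  · apply ContinuousOn.rpow_const
    · exact ContinuousOn.div continuousOn_const (by fun_prop) hden
    · intro u hu; right; linarith
  · apply ContinuousOn.div
    · apply ContinuousOn.mul
      · apply ContinuousOn.mul
        · apply ContinuousOn.mul continuousOn_const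
          apply ContinuousOn.rpow_const continuousOn_id
          intro u hu; left; exact ne_of_gt hu.1
        · fun_prop
      · exact ContinuousOn.sub ((Real.continuous_sqrt.comp (by fun_prop)).continuousOn) (by fun_prop)
    · fun_prop
    · exact hden2

lemma bound_integrableOn (γ S T : ℝ) (hγ1 : -1 < γ) (hγ2 : γ ≤ 1)
    (hS0 : 0 < S) (hS4 : S < 4) (hT0 : 0 < T) (hT4 : T < 4) :
    IntegrableOn (fun u : ℝ => (S/((1-u)^2 + S*u)) ^ ((1+γ)/2) *
      ((1+γ)/2 * u ^ ((1+γ)/2 - 1) * (1+u) * (Real.sqrt ((1-u)^2 + T*u) - (1-u))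
        / ((1-u)^2 + T*u))) (Set.Ioo 0 1) := by
  set p : ℝ := (1+γ)/2 with hpdef
  have hp0 : 0 < p := by simp only [hpdef]; linarith
  have hp1 : p ≤ 1 := by simp only [hpdef]; linarith
  have hTT : 0 < T*(4-T) := mul_pos hT0 (by linarith)
  have hsT : 0 < Real.sqrt (T*(4-T)) := Real.sqrt_pos.2 hTT
  set C : ℝ := 4/(4-S) * (2 * (2 / Real.sqrt (T*(4-T)))) with hC
  have hdom : IntegrableOn (fun u : ℝ => C * u ^ (p-1)) (Set.Ioo 0 1) := by
    have h1 : IntervalIntegrable (fun x : ℝ => x ^ (p-1)) volume 0 1 :=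
      intervalIntegral.intervalIntegrable_rpow' (by linarith)
    have h2 : IntegrableOn (fun x : ℝ => x ^ (p-1)) (Set.Ioo 0 1) :=
      ((intervalIntegrable_iff_integrableOn_Ioo_of_le zero_le_one).1 h1)
    exact h2.const_mul C
  apply Integrable.mono' hdom
  · exact (bound_contOn γ S T hγ1 hS0 hT0 hT4).aestronglyMeasurable measurableSet_Ioo
  · rw [ae_restrict_iff' measurableSet_Ioo]
    filter_upwards with u
    rintro ⟨hu0, hu1⟩
    have hv0 : 0 < 1 - u := by linarith
    set Ds : ℝ := (1-u)^2 + S*u with hDs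
    set D : ℝ := (1-u)^2 + T*u with hD
    have hDs0 : 0 < Ds := by positivity
    have hD0 : 0 < D := by positivity
    have hsD : 0 < Real.sqrt D := Real.sqrt_pos.2 hD0
    have hz0 : (0:ℝ) < u ^ (p-1) := Real.rpow_pos_of_pos hu0 _
    have hDge : (1-u) ≤ Real.sqrt D := by
      rw [show (1-u) = Real.sqrt ((1-u)^2) by rw [Real.sqrt_sq hv0.le]]
      apply Real.sqrt_le_sqrt
      nlinarith
    have hfb : (S/Ds) ^ p ≤ 4/(4-S) := by
      have hb : S/Ds ≤ 4/(4-S) := by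
        rw [div_le_div_iff₀ hDs0 (by linarith)]
        nlinarith [sq_nonneg (1-u-S/2)]
      have h1 : (S/Ds) ^ p ≤ (4/(4-S)) ^ p :=
        Real.rpow_le_rpow (by positivity) hb hp0.le
      have h2 : (4/(4-S) : ℝ) ^ p ≤ (4/(4-S)) ^ (1:ℝ) := by
        apply Real.rpow_le_rpow_of_exponent_le _ hp1
        rw [le_div_iff₀ (by linarith)]; linarith
      calc (S/Ds) ^ p ≤ (4/(4-S)) ^ p := h1
        _ ≤ (4/(4-S)) ^ (1:ℝ) := h2
        _ = 4/(4-S) := Real.rpow_one _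
    have hb2 : (Real.sqrt D - (1-u))/D ≤ 2/Real.sqrt (T*(4-T)) := by
      have h1 : Real.sqrt D - (1-u) ≤ Real.sqrt D := by linarith
      have h2 : (Real.sqrt D - (1-u))/D ≤ Real.sqrt D/D :=
        (div_le_div_iff_of_pos_right hD0).2 h1
      have h3 : Real.sqrt D / D = (Real.sqrt D)⁻¹ := Real.sqrt_div_self
      have hD4 : T*(4-T)/4 ≤ D := by nlinarith [sq_nonneg (1-u-T/2)]
      have h4 : Real.sqrt (T*(4-T))/2 ≤ Real.sqrt D := by
        calc Real.sqrt (T*(4-T))/2 = Real.sqrt (T*(4-T)/4) := by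
              rw [show (T*(4-T)/4 : ℝ) = (T*(4-T))/2^2 by ring, Real.sqrt_div hTT.le,
                Real.sqrt_sq (by norm_num : (0:ℝ) ≤ 2)]
          _ ≤ Real.sqrt D := Real.sqrt_le_sqrt hD4
      have h5 : (Real.sqrt D)⁻¹ ≤ 2/Real.sqrt (T*(4-T)) := by
        rw [show (2/Real.sqrt (T*(4-T)) : ℝ) = (Real.sqrt (T*(4-T))/2)⁻¹ by rw [inv_div]]
        exact inv_anti₀ (by positivity) h4
      calc (Real.sqrt D - (1-u))/D ≤ Real.sqrt D/D := h2
        _ = (Real.sqrt D)⁻¹ := h3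
        _ ≤ 2/Real.sqrt (T*(4-T)) := h5
    have hsecnn : (0:ℝ) ≤ (1+γ)/2 * u ^ (p-1) * (1+u) * (Real.sqrt D - (1-u)) / D :=
      div_nonneg (mul_nonneg (mul_nonneg (mul_nonneg (by linarith) hz0.le) (by linarith))
        (by linarith)) hD0.le
    have hBnn : (0:ℝ) ≤ (S/Ds) ^ p * ((1+γ)/2 * u ^ (p-1) * (1+u) * (Real.sqrt D - (1-u)) / D) :=
      mul_nonneg (Real.rpow_nonneg (by positivity) _) hsecnn
    simp only [Real.norm_eq_abs]
    rw [abs_of_nonneg hBnn]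
    have hm2 : (1+γ)/2 * (1+u) ≤ 2 := by nlinarith
    calc (S/Ds) ^ p * ((1+γ)/2 * u ^ (p-1) * (1+u) * (Real.sqrt D - (1-u)) / D)
        = ((S/Ds) ^ p) * (((1+γ)/2*(1+u)) * (u^(p-1) * ((Real.sqrt D - (1-u))/D))) := by
          ring
      _ ≤ (4/(4-S)) * (2 * (u^(p-1) * (2/Real.sqrt (T*(4-T))))) := by
          apply mul_le_mul hfb ?_ ?_ (div_nonneg (by norm_num) (by linarith))
          · apply mul_le_mul hm2 (mul_le_mul_of_nonneg_left hb2 hz0.le)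
              (mul_nonneg hz0.le (div_nonneg (by linarith) hD0.le)) (by norm_num)
          · exact mul_nonneg (by nlinarith) (mul_nonneg hz0.le (div_nonneg (by linarith) hD0.le))
      _ = C * u^(p-1) := by rw [hC]; ring

theorem stmt_7 (γ : ℝ) (hγ : γ ∈ Set.Ioc (-1:ℝ) 1)
    (I : ℝ → ℝ → ℝ)
    (hI : ∀ S T : ℝ, I S T =
      ∫ u in (0:ℝ)..1,
        (S/((1 - u)^2 + S*u)) ^ ((1 + γ)/2) *
          (Real.sqrt ((1 + γ*u)^2 - γ*T*u) / Real.sqrt ((1 - u)^2 + T*u)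
            - (1 - γ*u^2 - (1 - γ)*(1 - T/2)*u)/((1 - u)^2 + T*u)))
    (S T : ℝ) (hS : S ∈ Set.Ioo (0:ℝ) 4) (hT : T ∈ Set.Ioo (0:ℝ) 4)
    (a : ℝ) (ha : a = T/S) :
    I S T ≤
      (1 + γ)/2 * ∫ w in Set.Ioi (0:ℝ),
        (a + w) ^ (-(1 + γ)/2) * ((Real.sqrt (1 + w) - 1)/(1 + w)) * w ^ (-(1 - γ)/2) := by
  obtain ⟨hγ1, hγ2⟩ := hγ
  obtain ⟨hS0, hS4⟩ := hS
  obtain ⟨hT0, hT4⟩ := hT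
  subst ha
  rw [hI S T]
  rw [intervalIntegral.integral_of_le zero_le_one, integral_Ioc_eq_integral_Ioo]
  rw [← phi_image T hT0]
  rw [integral_image_eq_integral_abs_deriv_smul measurableSet_Ioo
      (fun x hx => (phi_deriv T x (ne_of_lt hx.2)).hasDerivWithinAt) (phi_inj T hT0)]
  rw [← integral_const_mul]
  have heq : Set.EqOn (fun u : ℝ =>
      (S/((1-u)^2 + S*u)) ^ ((1+γ)/2) *
      ((1+γ)/2 * u ^ ((1+γ)/2 - 1) * (1+u) * (Real.sqrt ((1-u)^2 + T*u) - (1-u))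
        / ((1-u)^2 + T*u)))
      (fun u : ℝ => (1+γ)/2 * (|T*(1+u)/(1-u)^3| •
        ((T/S + T*u/(1-u)^2) ^ (-(1+γ)/2) *
          ((Real.sqrt (1 + T*u/(1-u)^2) - 1)/(1 + T*u/(1-u)^2)) *
          (T*u/(1-u)^2) ^ (-(1-γ)/2)))) (Set.Ioo 0 1) := by
    rintro u ⟨hu0, hu1⟩
    simp only [smul_eq_mul]
    rw [cov_algebra γ S T u hγ1 hS0 hT0 hu0 hu1]
    ring
  refine le_trans ?_ (le_of_eq (setIntegral_congr_fun measurableSet_Ioo heq))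
  apply setIntegral_mono_on ?_ (bound_integrableOn γ S T hγ1 hγ2 hS0 hS4 hT0 hT4)
    measurableSet_Ioo
  · rintro u ⟨hu0, hu1⟩
    have key := keyPointwise γ T u hγ1 hγ2 hu0 hu1 hT0 hT4
    have hfnn : (0:ℝ) ≤ (S/((1 - u)^2 + S*u)) ^ ((1 + γ)/2) := by
      apply Real.rpow_nonneg
      have hv0 : 0 < 1 - u := by linarith
      positivity
    calc (S/((1 - u)^2 + S*u)) ^ ((1 + γ)/2) *
          (Real.sqrt ((1 + γ*u)^2 - γ*T*u) / Real.sqrt ((1 - u)^2 + T*u)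
            - (1 - γ*u^2 - (1 - γ)*(1 - T/2)*u)/((1 - u)^2 + T*u))
        ≤ (S/((1 - u)^2 + S*u)) ^ ((1 + γ)/2) *
          ((1+γ)/2 * u ^ ((1+γ)/2 - 1) * (1+u) * (Real.sqrt ((1 - u)^2 + T*u) - (1-u))
            / ((1 - u)^2 + T*u)) := mul_le_mul_of_nonneg_left key hfnn
      _ = (S/((1-u)^2 + S*u)) ^ ((1+γ)/2) *
          ((1+γ)/2 * u ^ ((1+γ)/2 - 1) * (1+u) * (Real.sqrt ((1-u)^2 + T*u) - (1-u))
            / ((1-u)^2 + T*u)) := rfl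
  · -- IntegrableOn of LHS integrand
    have hcont : Continuous (fun u : ℝ =>
        (S/((1 - u)^2 + S*u)) ^ ((1 + γ)/2) *
          (Real.sqrt ((1 + γ*u)^2 - γ*T*u) / Real.sqrt ((1 - u)^2 + T*u)
            - (1 - γ*u^2 - (1 - γ)*(1 - T/2)*u)/((1 - u)^2 + T*u))) := by
      have hDs : ∀ u : ℝ, (1-u)^2 + S*u ≠ 0 := by
        intro u
        have : (0:ℝ) < (1-u)^2 + S*u := by nlinarith [sq_nonneg (1-u-S/2)]
        exact this.ne'
      have hD : ∀ u : ℝ, (1-u)^2 + T*u ≠ 0 := by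
        intro u
        have : (0:ℝ) < (1-u)^2 + T*u := by nlinarith [sq_nonneg (1-u-T/2)]
        exact this.ne'
      have hsD : ∀ u : ℝ, Real.sqrt ((1-u)^2 + T*u) ≠ 0 := by
        intro u
        have : (0:ℝ) < (1-u)^2 + T*u := by nlinarith [sq_nonneg (1-u-T/2)]
        exact (Real.sqrt_pos.2 this).ne'
      apply Continuous.mul
      · apply Continuous.rpow_const
        · exact Continuous.div continuous_const (by fun_prop) hDs
        · intro u; right; linarith
      · apply Continuous.sub
        · exact Continuous.div (Real.continuous_sqrt.comp (by fun_prop))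
            (Real.continuous_sqrt.comp (by fun_prop)) hsD
        · exact Continuous.div (by fun_prop) (by fun_prop) hD
    exact (hcont.integrableOn_Icc (a := 0) (b := 1)).mono_set Set.Ioo_subset_Icc_self
end

section
/- The function G₁(a) := ∫₀^∞ [ 1/(a+w) + 1/(1/a + w) ] · (√(1+w) − 1)/(1+w) dw is increasing on the interval (0,1). -/
open Set MeasureTheory Real

noncomputable def kk (w : ℝ) : ℝ := (Real.sqrt (1 + w) - 1) / (1 + w)

lemma one_le_sqrt_one_add {w : ℝ} (hw : 0 ≤ w) : 1 ≤ Real.sqrt (1 + w) := by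
  have := Real.sqrt_le_sqrt (show (1:ℝ) ≤ 1 + w by linarith)
  rwa [Real.sqrt_one] at this

lemma kk_nonneg {w : ℝ} (hw : 0 ≤ w) : 0 ≤ kk w := by
  have := one_le_sqrt_one_add hw
  exact div_nonneg (by linarith) (by linarith)

lemma kk_le_one {w : ℝ} (hw : 0 ≤ w) : kk w ≤ 1 := by
  have h1 : (0:ℝ) < 1 + w := by linarith
  have h2 : Real.sqrt (1 + w) ^ 2 = 1 + w := Real.sq_sqrt h1.le
  have h3 : 0 ≤ Real.sqrt (1 + w) := Real.sqrt_nonneg _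
  rw [kk, div_le_one h1]
  nlinarith

lemma kk_le {w : ℝ} (hw : 0 < w) : kk w ≤ 1 / Real.sqrt w := by
  have h1 : (0:ℝ) < 1 + w := by linarith
  have h2 : Real.sqrt (1 + w) ^ 2 = 1 + w := Real.sq_sqrt h1.le
  have h3 : 0 < Real.sqrt (1 + w) := Real.sqrt_pos.mpr h1
  have h4 : 0 < Real.sqrt w := Real.sqrt_pos.mpr hw
  have h5 : Real.sqrt w ≤ Real.sqrt (1 + w) := Real.sqrt_le_sqrt (by linarith)
  rw [kk, div_le_div_iff₀ h1 h4]
  nlinarith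

lemma kk_key {w : ℝ} (hw : 1 < w) : kk w⁻¹ < kk w := by
  have hw0 : (0:ℝ) < w := by linarith
  set s := Real.sqrt w with hs
  set t := Real.sqrt (1 + w) with ht
  have hs2 : s ^ 2 = w := Real.sq_sqrt hw0.le
  have ht2 : t ^ 2 = 1 + w := Real.sq_sqrt (by linarith)
  have hs0 : 0 ≤ s := Real.sqrt_nonneg _
  have hs1 : 1 < s := by nlinarith
  have ht0 : 0 < t := Real.sqrt_pos.mpr (by linarith)
  have hts : t < 1 + s := by nlinarith
  have hsne : s ≠ 0 := by positivity
  have htne : t ≠ 0 := ne_of_gt ht0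
  have h1 : (1 + w⁻¹) = (1 + w) / w := by field_simp; ring
  have e1 : Real.sqrt (1 + w⁻¹) = t / s := by
    rw [h1, ht, hs, ← Real.sqrt_div (by linarith : (0:ℝ) ≤ 1 + w)]
  have e2 : (1 + w⁻¹) = t ^ 2 / s ^ 2 := by rw [h1, hs2, ht2]
  have v1 : kk w⁻¹ = (s * t - s ^ 2) / t ^ 2 := by
    rw [kk, e1, e2]; field_simp
  have v2 : kk w = (t - 1) / t ^ 2 := by rw [kk, ← ht, ← ht2]
  rw [v1, v2, div_lt_div_iff₀ (by positivity) (by positivity)]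
  nlinarith [mul_pos (sub_pos.mpr hs1) (sub_pos.mpr hts), sq_nonneg t, ht0]

lemma cont_ff {c : ℝ} (hc0 : 0 < c) :
    ContinuousOn (fun w : ℝ => (1/(c+w) + 1/(1/c+w)) * kk w) (Ioi 0) := by
  have h1 : ContinuousOn (fun w : ℝ => 1/(c+w)) (Ioi 0) :=
    ContinuousOn.div continuousOn_const (by fun_prop)
      (fun w hw => by have : (0:ℝ) < w := hw; positivity)
  have h2 : ContinuousOn (fun w : ℝ => 1/(1/c+w)) (Ioi 0) :=
    ContinuousOn.div continuousOn_const (by fun_prop)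
      (fun w hw => by have : (0:ℝ) < w := hw; positivity)
  have h3 : ContinuousOn kk (Ioi 0) := by
    apply ContinuousOn.div (by fun_prop) (by fun_prop)
    intro w hw; have : (0:ℝ) < w := hw; positivity
  exact (h1.add h2).mul h3

lemma ff_nonneg {c w : ℝ} (hc0 : 0 < c) (hw : 0 < w) :
    0 ≤ (1/(c+w) + 1/(1/c+w)) * kk w := by
  have h1 : 0 < c + w := by linarith
  have h2 : 0 < 1/c + w := by positivity
  exact mul_nonneg (by positivity) (kk_nonneg hw.le)

lemma integrable_ff {c : ℝ} (hc0 : 0 < c) (hc1 : c ≤ 1) :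
    IntegrableOn (fun w : ℝ => (1/(c+w) + 1/(1/c+w)) * kk w) (Ioi 0) := by
  have hcont := cont_ff hc0
  have hsplit : Ioc (0:ℝ) 1 ∪ Ioi 1 = Ioi 0 := Ioc_union_Ioi_eq_Ioi zero_le_one
  rw [← hsplit, integrableOn_union]
  have hc1' : (1:ℝ) ≤ 1/c := by rw [le_div_iff₀ hc0]; linarith
  constructor
  · apply Integrable.mono' (g := fun _ : ℝ => 1/c + 1)
      (integrableOn_const measure_Ioc_lt_top.ne)
    · exact (hcont.mono (fun x hx => lt_of_lt_of_le hx.1 le_rfl)).aestronglyMeasurable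
        measurableSet_Ioc
    · rw [ae_restrict_iff' measurableSet_Ioc]
      filter_upwards with w hw
      have hw0 : 0 < w := hw.1
      have h1 : 0 < c + w := by linarith
      have h2 : 0 < 1/c + w := by positivity
      rw [Real.norm_eq_abs, abs_of_nonneg (ff_nonneg hc0 hw0)]
      have b1 : 1/(c+w) ≤ 1/c := by
        apply one_div_le_one_div_of_le hc0; linarith
      have b2 : 1/(1/c+w) ≤ 1 := by
        rw [div_le_one h2]; linarith
      have b3 := kk_le_one hw0.le
      have b4 := kk_nonneg hw0.le
      nlinarith [add_pos (one_div_pos.mpr h1) (one_div_pos.mpr h2)]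
  · apply Integrable.mono' (g := fun w : ℝ => (1/c + 1) * w ^ (-(3/2) : ℝ))
      (((integrableOn_Ioi_rpow_of_lt (by norm_num) one_pos)).const_mul _)
    · exact (hcont.mono (fun x (hx : x ∈ Ioi (1:ℝ)) => show (0:ℝ) < x from lt_trans one_pos hx)).aestronglyMeasurable
        measurableSet_Ioi
    · rw [ae_restrict_iff' measurableSet_Ioi]
      filter_upwards with w hw
      have hw1 : (1:ℝ) < w := hw
      have hw0 : (0:ℝ) < w := by linarith
      have hsw : 0 < Real.sqrt w := Real.sqrt_pos.mpr hw0
      have h1 : 0 < c + w := by linarith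
      have h2 : 0 < 1/c + w := by positivity
      rw [Real.norm_eq_abs, abs_of_nonneg (ff_nonneg hc0 hw0)]
      have hr : w ^ (-(3/2) : ℝ) = w⁻¹ * (Real.sqrt w)⁻¹ := by
        rw [Real.sqrt_eq_rpow, ← Real.rpow_neg hw0.le, ← Real.rpow_neg_one w,
          ← Real.rpow_add hw0]
        norm_num
      have b1 : 1/(c+w) + 1/(1/c+w) ≤ (1/c + 1) * w⁻¹ := by
        have e1 : 1/(c+w) ≤ 1/c * w⁻¹ := by
          have h : 1/c * w⁻¹ = 1/(c*w) := by field_simp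
          rw [h]
          exact one_div_le_one_div_of_le (by positivity) (by nlinarith)
        have e2 : 1/(1/c+w) ≤ 1 * w⁻¹ := by
          rw [one_mul, ← one_div]
          exact one_div_le_one_div_of_le hw0 (by nlinarith [one_div_pos.mpr hc0])
        calc 1/(c+w) + 1/(1/c+w) ≤ 1/c * w⁻¹ + 1 * w⁻¹ := add_le_add e1 e2
        _ = (1/c + 1) * w⁻¹ := by ring
      have b2 : kk w ≤ (Real.sqrt w)⁻¹ := by
        simpa [one_div] using kk_le hw0
      have hb1nonneg : (0:ℝ) ≤ (1/c + 1) * w⁻¹ := by positivity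
      calc (1/(c+w) + 1/(1/c+w)) * kk w ≤ ((1/c + 1) * w⁻¹) * (Real.sqrt w)⁻¹ :=
            mul_le_mul b1 b2 (kk_nonneg hw0.le) hb1nonneg
      _ = (1/c + 1) * w ^ (-(3/2) : ℝ) := by rw [hr]; ring

lemma key_pos {a b : ℝ} (ha0 : 0 < a) (ha1 : a < 1) (hb0 : 0 < b) (hb1 : b < 1)
    (hip : IntegrableOn
      (fun w : ℝ => (w^2 - 1) * kk w / ((a+w)*(1/a+w)*(b+w)*(1/b+w))) (Ioi 0)) :
    0 < ∫ w in Ioi (0:ℝ), (w^2 - 1) * kk w / ((a+w)*(1/a+w)*(b+w)*(1/b+w)) := by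
  set p : ℝ → ℝ := fun w => (w^2 - 1) * kk w / ((a+w)*(1/a+w)*(b+w)*(1/b+w)) with hp
  have himg : (fun x : ℝ => x⁻¹) '' Ioi 1 = Ioo 0 1 := by
    ext x
    simp only [mem_image, mem_Ioi, mem_Ioo]
    constructor
    · rintro ⟨y, hy, rfl⟩
      exact ⟨inv_pos.mpr (lt_trans one_pos hy), (inv_lt_one₀ (lt_trans one_pos hy)).mpr hy⟩
    · rintro ⟨h1, h2⟩
      exact ⟨x⁻¹, (one_lt_inv₀ h1).mpr h2, inv_inv x⟩
  have hderiv : ∀ x ∈ Ioi (1:ℝ), HasDerivWithinAt (fun y : ℝ => y⁻¹) (-(x^2)⁻¹) (Ioi 1) x :=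
    fun x hx => (hasDerivAt_inv (ne_of_gt (lt_trans one_pos hx))).hasDerivWithinAt
  have hinj : InjOn (fun y : ℝ => y⁻¹) (Ioi 1) := inv_injective.injOn
  have hchg := integral_image_eq_integral_abs_deriv_smul measurableSet_Ioi hderiv hinj p
  rw [himg] at hchg
  have hioo : IntegrableOn p (Ioo 0 1) :=
    hip.mono_set (fun x hx => hx.1)
  have hioi1 : IntegrableOn p (Ioi 1) :=
    hip.mono_set (fun x (hx : x ∈ Ioi (1:ℝ)) => show (0:ℝ) < x from lt_trans one_pos hx)
  have hint2 : IntegrableOn (fun x : ℝ => |(-(x^2)⁻¹)| • p x⁻¹) (Ioi 1) := by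
    have := (integrableOn_image_iff_integrableOn_abs_deriv_smul measurableSet_Ioi
      hderiv hinj p).mp (by rw [himg]; exact hioo)
    exact this
  have hsplit : ∫ w in Ioi (0:ℝ), p w = (∫ w in Ioc (0:ℝ) 1, p w) + ∫ w in Ioi (1:ℝ), p w := by
    rw [← setIntegral_union (Ioc_disjoint_Ioi le_rfl) measurableSet_Ioi
      (hip.mono_set (fun x hx => hx.1)) hioi1, Ioc_union_Ioi_eq_Ioi zero_le_one]
  rw [hsplit, integral_Ioc_eq_integral_Ioo, hchg, ← integral_add hint2 hioi1]
  have hqpos : ∀ x ∈ Ioi (1:ℝ), 0 < |(-(x^2)⁻¹)| • p x⁻¹ + p x := by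
    intro x hx
    have hx1 : (1:ℝ) < x := hx
    have hx0 : (0:ℝ) < x := lt_trans one_pos hx1
    have hxne : x ≠ 0 := ne_of_gt hx0
    have hane : a ≠ 0 := ne_of_gt ha0
    have hbne : b ≠ 0 := ne_of_gt hb0
    have hd1 : (0:ℝ) < a + x := by linarith
    have hd2 : (0:ℝ) < 1/a + x := by positivity
    have hd3 : (0:ℝ) < b + x := by linarith
    have hd4 : (0:ℝ) < 1/b + x := by positivity
    have hxi : (0:ℝ) < x⁻¹ := by positivity
    have hd5 : (0:ℝ) < a + x⁻¹ := by linarith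
    have hd6 : (0:ℝ) < 1/a + x⁻¹ := by positivity
    have hd7 : (0:ℝ) < b + x⁻¹ := by linarith
    have hd8 : (0:ℝ) < 1/b + x⁻¹ := by positivity
    have habs : |(-(x^2)⁻¹)| = (x^2)⁻¹ := by
      rw [abs_neg, abs_inv, abs_of_pos (by positivity)]
    have e : |(-(x^2)⁻¹)| • p x⁻¹ + p x
        = (x^2 - 1) * (kk x - kk x⁻¹) / ((a+x)*(1/a+x)*(b+x)*(1/b+x)) := by
      rw [habs, smul_eq_mul, hp]
      field_simp
      ring
    rw [e]
    have hnum : 0 < (x^2 - 1) * (kk x - kk x⁻¹) :=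
      mul_pos (by nlinarith) (sub_pos.mpr (kk_key hx1))
    positivity
  have hq : IntegrableOn (fun x : ℝ => |(-(x^2)⁻¹)| • p x⁻¹ + p x) (Ioi 1) :=
    hint2.add hioi1
  have h0 : (0 : ℝ → ℝ) ≤ᵐ[volume.restrict (Ioi 1)]
      fun x : ℝ => |(-(x^2)⁻¹)| • p x⁻¹ + p x :=
    (ae_restrict_mem measurableSet_Ioi).mono fun x hx => (hqpos x hx).le
  refine (setIntegral_pos_iff_support_of_nonneg_ae h0 hq).mpr ?_
  have hsub : Ioi (1:ℝ) ⊆ Function.support (fun x => |(-(x^2)⁻¹)| • p x⁻¹ + p x) :=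
    fun x hx => ne_of_gt (hqpos x hx)
  rw [inter_eq_self_of_subset_right hsub, Real.volume_Ioi]
  simp

theorem stmt_10 :
    StrictMonoOn (fun a : ℝ =>
      ∫ w in Set.Ioi (0:ℝ),
        (1/(a + w) + 1/(1/a + w)) * ((Real.sqrt (1 + w) - 1)/(1 + w)))
      (Set.Ioo (0:ℝ) 1) := by
  intro a ha b hb hab
  obtain ⟨ha0, ha1⟩ := ha
  obtain ⟨hb0, hb1⟩ := hb
  simp only
  have hfa : IntegrableOn (fun w : ℝ => (1/(a+w) + 1/(1/a+w)) * kk w) (Ioi 0) :=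
    integrable_ff ha0 ha1.le
  have hfb : IntegrableOn (fun w : ℝ => (1/(b+w) + 1/(1/b+w)) * kk w) (Ioi 0) :=
    integrable_ff hb0 hb1.le
  set c : ℝ := (a + 1/a) - (b + 1/b) with hcdef
  have hcpos : 0 < c := by
    have hab1 : a * b < 1 := by nlinarith
    have h : c = (b - a) * (1 - a*b) / (a*b) := by
      rw [hcdef]; field_simp; ring
    rw [h]
    have h1 : 0 < b - a := by linarith
    have h2 : 0 < 1 - a*b := by linarith
    positivity
  set p : ℝ → ℝ := fun w => (w^2 - 1) * kk w / ((a+w)*(1/a+w)*(b+w)*(1/b+w)) with hp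
  have hpt : ∀ w ∈ Ioi (0:ℝ),
      (1/(b+w) + 1/(1/b+w)) * kk w - (1/(a+w) + 1/(1/a+w)) * kk w = c * p w := by
    intro w hw
    have hw0 : (0:ℝ) < w := hw
    have hane : a ≠ 0 := ne_of_gt ha0
    have hbne : b ≠ 0 := ne_of_gt hb0
    have hd1 : a + w ≠ 0 := by positivity
    have hd2 : 1/a + w ≠ 0 := by positivity
    have hd3 : b + w ≠ 0 := by positivity
    have hd4 : 1/b + w ≠ 0 := by positivity
    rw [hp, hcdef]
    field_simp
    ring
  have hip : IntegrableOn p (Ioi 0) := by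
    have h : IntegrableOn (fun w : ℝ =>
        c⁻¹ * ((1/(b+w) + 1/(1/b+w)) * kk w - (1/(a+w) + 1/(1/a+w)) * kk w)) (Ioi 0) := by
      exact (hfb.sub hfa).const_mul c⁻¹
    apply IntegrableOn.congr_fun h ?_ measurableSet_Ioi
    intro w hw
    simp only
    rw [hpt w hw]
    field_simp
  have hkey : 0 < ∫ w in Ioi (0:ℝ), p w := key_pos ha0 ha1 hb0 hb1 hip
  have hdiff :
      (∫ w in Ioi (0:ℝ), (1/(b+w) + 1/(1/b+w)) * kk w)
        - ∫ w in Ioi (0:ℝ), (1/(a+w) + 1/(1/a+w)) * kk w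
      = c * ∫ w in Ioi (0:ℝ), p w := by
    rw [← integral_sub hfb hfa,
      setIntegral_congr_fun measurableSet_Ioi hpt, integral_const_mul]
  have hlt : (∫ w in Ioi (0:ℝ), (1/(a+w) + 1/(1/a+w)) * kk w)
      < ∫ w in Ioi (0:ℝ), (1/(b+w) + 1/(1/b+w)) * kk w := by
    have h2 : 0 < c * ∫ w in Ioi (0:ℝ), p w := mul_pos hcpos hkey
    rw [← hdiff] at h2
    linarith
  exact hlt
end

section
/- For every a ∈ (0,1), ∫₀^∞ [ 1/(a+w) + 1/(1/a + w) ] · (√(1+w) − 1)/(1+w) dw = 2·√(a/(1−a))·arctan(√((1−a)/a)) + (1/√(1−a))·log( (1 + √(1−a))/(1 − √(1−a)) ) − ((1+a)/(1−a))·log(1/a). -/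
open Real MeasureTheory Filter Set

private lemma sqrt_one_add_atTop : Filter.Tendsto (fun w : ℝ => Real.sqrt (1 + w)) atTop atTop := by
  rw [Filter.tendsto_atTop_atTop]
  intro b
  refine ⟨b^2, fun x hx => ?_⟩
  have h1 : Real.sqrt (b^2) ≤ Real.sqrt (1 + x) := Real.sqrt_le_sqrt (by nlinarith [sq_nonneg b])
  have h2 : b ≤ Real.sqrt (b^2) := by
    rw [Real.sqrt_sq_eq_abs]; exact le_abs_self b
  linarith

set_option maxHeartbeats 1000000

theorem stmt_11 (a : ℝ) (ha : a ∈ Set.Ioo (0:ℝ) 1) :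
    ∫ w in Set.Ioi (0:ℝ),
        (1/(a + w) + 1/(1/a + w)) * ((Real.sqrt (1 + w) - 1)/(1 + w)) =
      2 * Real.sqrt (a/(1 - a)) * Real.arctan (Real.sqrt ((1 - a)/a))
        + (1/Real.sqrt (1 - a)) * Real.log ((1 + Real.sqrt (1 - a))/(1 - Real.sqrt (1 - a)))
        - ((1 + a)/(1 - a)) * Real.log (1/a) := by
  obtain ⟨ha0, ha1⟩ := ha
  have hb : (0:ℝ) < 1 - a := by linarith
  set sb := Real.sqrt (1-a) with hsb
  have hsb2 : sb^2 = 1 - a := Real.sq_sqrt hb.le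
  have hsbpos : 0 < sb := Real.sqrt_pos.mpr hb
  have hsb1 : sb < 1 := by
    have h := Real.sqrt_lt_sqrt hb.le (show 1-a < 1 by linarith)
    rwa [Real.sqrt_one] at h
  set sc := Real.sqrt (a/(1-a)) with hsc
  have hsc2 : sc^2 = a/(1-a) := Real.sq_sqrt (by positivity)
  have hscpos : 0 < sc := Real.sqrt_pos.mpr (by positivity)
  set F : ℝ → ℝ := fun w => (1/(1-a)) * (Real.log (1+w) - Real.log (a+w))
        + (a/(1-a)) * (Real.log (1/a+w) - Real.log (1+w))
        + (1/sb) * (Real.log (Real.sqrt (1+w) - sb) - Real.log (Real.sqrt (1+w) + sb))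
        + 2 * sc * Real.arctan (Real.sqrt (1+w) * sc) with hF
  -- derivative
  have hderiv : ∀ w ∈ Set.Ici (0:ℝ), HasDerivAt F
      ((1/(a + w) + 1/(1/a + w)) * ((Real.sqrt (1 + w) - 1)/(1 + w))) w := by
    intro w hw
    have hw0 : (0:ℝ) ≤ w := hw
    have h1w : (0:ℝ) < 1 + w := by linarith
    have haw : (0:ℝ) < a + w := by linarith
    have hiaw : (0:ℝ) < 1/a + w := by positivity
    set s := Real.sqrt (1+w) with hs
    have hs2 : s^2 = 1 + w := Real.sq_sqrt h1w.le
    have hspos : 0 < s := Real.sqrt_pos.mpr h1w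
    have hs1 : 1 ≤ s := by
      have h := Real.sqrt_le_sqrt (show (1:ℝ) ≤ 1+w by linarith)
      rwa [Real.sqrt_one] at h
    have hssb : sb < s := lt_of_lt_of_le hsb1 hs1
    have h0 : HasDerivAt (fun w : ℝ => 1 + w) 1 w := by
      simpa using (hasDerivAt_id w).const_add 1
    have ha0' : HasDerivAt (fun w : ℝ => a + w) 1 w := by
      simpa using (hasDerivAt_id w).const_add a
    have hia' : HasDerivAt (fun w : ℝ => 1/a + w) 1 w := by
      simpa using (hasDerivAt_id w).const_add (1/a)
    have hl1 : HasDerivAt (fun w : ℝ => Real.log (1+w)) (1/(1+w)) w := by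
      simpa using h0.log h1w.ne'
    have hl2 : HasDerivAt (fun w : ℝ => Real.log (a+w)) (1/(a+w)) w := by
      simpa using ha0'.log haw.ne'
    have hl3 : HasDerivAt (fun w : ℝ => Real.log (1/a+w)) (1/(1/a+w)) w := by
      simpa using hia'.log hiaw.ne'
    have hsq : HasDerivAt (fun w : ℝ => Real.sqrt (1+w)) (1/(2*s)) w := by
      simpa using h0.sqrt h1w.ne'
    have hlm : HasDerivAt (fun w : ℝ => Real.log (Real.sqrt (1+w) - sb))
        ((1/(2*s))/(s - sb)) w := by
      simpa using (hsq.sub_const sb).log (by simp only [← hs]; intro h; nlinarith)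
    have hlp : HasDerivAt (fun w : ℝ => Real.log (Real.sqrt (1+w) + sb))
        ((1/(2*s))/(s + sb)) w := by
      simpa using (hsq.add_const sb).log (by simp only [← hs]; positivity)
    have harc : HasDerivAt (fun w : ℝ => Real.arctan (Real.sqrt (1+w) * sc))
        (1/(1 + (s*sc)^2) * ((1/(2*s)) * sc)) w := by
      simpa using (hsq.mul_const sc).arctan
    have hd1 : HasDerivAt (fun w : ℝ => (1/(1-a)) * (Real.log (1+w) - Real.log (a+w)))
        (-(1/((1+w)*(a+w)))) w := by
      have := ((hl1.sub hl2).const_mul (1/(1-a)))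
      refine this.congr_deriv ?_; symm
      field_simp
      ring
    have hd2 : HasDerivAt (fun w : ℝ => (a/(1-a)) * (Real.log (1/a+w) - Real.log (1+w)))
        (-(1/((1+w)*(1/a+w)))) w := by
      have := ((hl3.sub hl1).const_mul (a/(1-a)))
      refine this.congr_deriv ?_; symm
      have : 1/(1/a+w) - 1/(1+w) = -( (1-a)/a ) / ((1/a+w)*(1+w)) := by
        field_simp
        ring
      rw [this]
      field_simp
    have hd3 : HasDerivAt (fun w : ℝ => (1/sb) * (Real.log (Real.sqrt (1+w) - sb)
        - Real.log (Real.sqrt (1+w) + sb))) (1/(s*(a+w))) w := by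
      have := ((hlm.sub hlp).const_mul (1/sb))
      refine this.congr_deriv ?_; symm
      have hrw : a + w = s^2 - sb^2 := by rw [hs2, hsb2]; ring
      rw [hrw]
      have h1 : s - sb ≠ 0 := by nlinarith
      have h2 : s + sb ≠ 0 := by positivity
      have h3 : s^2 - sb^2 ≠ 0 := by nlinarith
      have hsne : s ≠ 0 := hspos.ne'
      have hsbne : sb ≠ 0 := hsbpos.ne'
      have key : (1:ℝ)/(2*s)/(s-sb) - 1/(2*s)/(s+sb) = sb/(s*(s^2-sb^2)) := by
        field_simp
        ring
      rw [key]
      field_simp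
    have hd4 : HasDerivAt (fun w : ℝ => 2 * sc * Real.arctan (Real.sqrt (1+w) * sc))
        (1/(s*(1/a+w))) w := by
      have := (harc.const_mul (2*sc))
      refine this.congr_deriv ?_; symm
      have hne : (1:ℝ) + (s*sc)^2 ≠ 0 := by positivity
      have hrw : 1/a + w = (1 + (s*sc)^2) * (1-a) / a := by
        have : (s*sc)^2 = (1+w) * (a/(1-a)) := by rw [mul_pow, hs2, hsc2]
        rw [this]; field_simp; ring
      rw [hrw]
      have hsc2' : sc^2 * (1-a) = a := by rw [hsc2]; field_simp
      have hsne : s ≠ 0 := hspos.ne'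
      field_simp
      linear_combination (-1) * hsc2'
    have hsum := ((hd1.add hd2).add hd3).add hd4
    rw [hF]
    refine hsum.congr_deriv ?_; symm
    rw [show (1:ℝ)+w = s^2 from hs2.symm]
    field_simp
    ring
  -- nonnegativity
  have hpos : ∀ w ∈ Set.Ioi (0:ℝ),
      0 ≤ (1/(a + w) + 1/(1/a + w)) * ((Real.sqrt (1 + w) - 1)/(1 + w)) := by
    intro w hw
    have hw0 : (0:ℝ) < w := hw
    have h1 : (0:ℝ) ≤ 1/(a+w) + 1/(1/a+w) := by positivity
    have h2 : (1:ℝ) ≤ Real.sqrt (1+w) := by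
      have h := Real.sqrt_le_sqrt (show (1:ℝ) ≤ 1+w by linarith)
      rwa [Real.sqrt_one] at h
    have h3 : (0:ℝ) ≤ (Real.sqrt (1+w) - 1)/(1+w) := by
      apply div_nonneg (by linarith) (by linarith)
    exact mul_nonneg h1 h3
  -- limit at infinity
  have hsT : Tendsto (fun w : ℝ => Real.sqrt (1+w)) atTop atTop := sqrt_one_add_atTop
  have hT1 : Tendsto (fun w : ℝ => (1/(1-a)) * (Real.log (1+w) - Real.log (a+w))) atTop (nhds 0) := by
    have hq : Tendsto (fun w : ℝ => (1+w)/(a+w)) atTop (nhds 1) := by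
      have h1 : Tendsto (fun w : ℝ => a + w) atTop atTop :=
        tendsto_atTop_add_const_left _ a tendsto_id
      have h2 : Tendsto (fun w : ℝ => 1 + (1-a) * (a+w)⁻¹) atTop (nhds (1 + (1-a)*0)) :=
        (tendsto_const_nhds.mul h1.inv_tendsto_atTop).const_add 1
      rw [mul_zero, add_zero] at h2
      apply h2.congr'
      filter_upwards [eventually_gt_atTop 0] with w hw
      have haw : (0:ℝ) < a + w := by linarith
      field_simp
      ring
    have hlog : Tendsto (fun w : ℝ => Real.log ((1+w)/(a+w))) atTop (nhds 0) := by
      have := (Real.continuousAt_log (by norm_num : (1:ℝ) ≠ 0)).tendsto.comp hq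
      simpa only [Function.comp_def, Real.log_one] using this
    have : Tendsto (fun w : ℝ => Real.log (1+w) - Real.log (a+w)) atTop (nhds 0) := by
      apply hlog.congr'
      filter_upwards [eventually_gt_atTop 0] with w hw
      rw [Real.log_div (by linarith) (by positivity)]
    simpa using this.const_mul (1/(1-a))
  have hT2 : Tendsto (fun w : ℝ => (a/(1-a)) * (Real.log (1/a+w) - Real.log (1+w))) atTop (nhds 0) := by
    have hq : Tendsto (fun w : ℝ => (1/a+w)/(1+w)) atTop (nhds 1) := by
      have h1 : Tendsto (fun w : ℝ => 1 + w) atTop atTop :=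
        tendsto_atTop_add_const_left _ 1 tendsto_id
      have h2 : Tendsto (fun w : ℝ => 1 + (1/a-1) * (1+w)⁻¹) atTop (nhds (1 + (1/a-1)*0)) :=
        (tendsto_const_nhds.mul h1.inv_tendsto_atTop).const_add 1
      rw [mul_zero, add_zero] at h2
      apply h2.congr'
      filter_upwards [eventually_gt_atTop 0] with w hw
      have h1w : (0:ℝ) < 1 + w := by linarith
      field_simp
      ring
    have hlog : Tendsto (fun w : ℝ => Real.log ((1/a+w)/(1+w))) atTop (nhds 0) := by
      have := (Real.continuousAt_log (by norm_num : (1:ℝ) ≠ 0)).tendsto.comp hq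
      simpa only [Function.comp_def, Real.log_one] using this
    have : Tendsto (fun w : ℝ => Real.log (1/a+w) - Real.log (1+w)) atTop (nhds 0) := by
      apply hlog.congr'
      filter_upwards [eventually_gt_atTop 0] with w hw
      rw [Real.log_div (by positivity) (by linarith)]
    simpa using this.const_mul (a/(1-a))
  have hT3 : Tendsto (fun w : ℝ => (1/sb) * (Real.log (Real.sqrt (1+w) - sb)
      - Real.log (Real.sqrt (1+w) + sb))) atTop (nhds 0) := by
    have hq : Tendsto (fun w : ℝ => (Real.sqrt (1+w) - sb)/(Real.sqrt (1+w) + sb)) atTop (nhds 1) := by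
      have h1 : Tendsto (fun w : ℝ => Real.sqrt (1+w) + sb) atTop atTop :=
        tendsto_atTop_add_const_right _ sb hsT
      have h2 : Tendsto (fun w : ℝ => 1 - (2*sb) * (Real.sqrt (1+w) + sb)⁻¹)
          atTop (nhds (1 - (2*sb)*0)) :=
        (tendsto_const_nhds.sub (tendsto_const_nhds.mul h1.inv_tendsto_atTop))
      rw [mul_zero, sub_zero] at h2
      apply h2.congr'
      filter_upwards [eventually_gt_atTop 0] with w hw
      have h1w : (0:ℝ) < 1 + w := by linarith
      have hsp : 0 < Real.sqrt (1+w) := Real.sqrt_pos.mpr h1w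
      have hne : Real.sqrt (1+w) + sb ≠ 0 := by positivity
      field_simp
      ring
    have hlog : Tendsto (fun w : ℝ => Real.log ((Real.sqrt (1+w) - sb)/(Real.sqrt (1+w) + sb)))
        atTop (nhds 0) := by
      have := (Real.continuousAt_log (by norm_num : (1:ℝ) ≠ 0)).tendsto.comp hq
      simpa only [Function.comp_def, Real.log_one] using this
    have : Tendsto (fun w : ℝ => Real.log (Real.sqrt (1+w) - sb)
        - Real.log (Real.sqrt (1+w) + sb)) atTop (nhds 0) := by
      apply hlog.congr'
      filter_upwards [eventually_gt_atTop 0] with w hw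
      have h2 : (1:ℝ) ≤ Real.sqrt (1+w) := by
        have h := Real.sqrt_le_sqrt (show (1:ℝ) ≤ 1+w by linarith)
        rwa [Real.sqrt_one] at h
      have hm : Real.sqrt (1+w) - sb ≠ 0 := by nlinarith
      have hp : Real.sqrt (1+w) + sb ≠ 0 := by positivity
      rw [Real.log_div hm hp]
    simpa using this.const_mul (1/sb)
  have hT4 : Tendsto (fun w : ℝ => 2 * sc * Real.arctan (Real.sqrt (1+w) * sc))
      atTop (nhds (2 * sc * (Real.pi/2))) := by
    have h1 : Tendsto (fun w : ℝ => Real.sqrt (1+w) * sc) atTop atTop :=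
      hsT.atTop_mul_const hscpos
    have h2 : Tendsto (fun w : ℝ => Real.arctan (Real.sqrt (1+w) * sc)) atTop
        (nhds (Real.pi/2)) :=
      (tendsto_nhds_of_tendsto_nhdsWithin Real.tendsto_arctan_atTop).comp h1
    exact h2.const_mul (2*sc)
  have hlim : Tendsto F atTop (nhds (Real.pi * sc)) := by
    have := ((hT1.add hT2).add hT3).add hT4
    rw [hF]
    convert this using 2
    ring
  have key := integral_Ioi_of_hasDerivAt_of_nonneg' hderiv hpos hlim
  rw [key]
  -- compute F 0 and finish
  have hF0 : F 0 = (1/(1-a)) * (0 - Real.log a)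
      + (a/(1-a)) * (Real.log (1/a) - 0)
      + (1/sb) * (Real.log (1 - sb) - Real.log (1 + sb))
      + 2 * sc * Real.arctan sc := by
    rw [hF]
    norm_num
  rw [hF0]
  have harc : Real.arctan (Real.sqrt ((1-a)/a)) = Real.pi/2 - Real.arctan sc := by
    have h1 : Real.sqrt ((1-a)/a) = sc⁻¹ := by
      rw [hsc, ← Real.sqrt_inv, inv_div]
    rw [h1, Real.arctan_inv_of_pos hscpos]
  rw [harc]
  have hlogd : Real.log ((1 + sb)/(1 - sb)) = Real.log (1 + sb) - Real.log (1 - sb) :=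
    Real.log_div (by positivity) (by intro h; nlinarith)
  rw [hlogd]
  have hloga : Real.log (1/a) = -Real.log a := by
    rw [one_div, Real.log_inv]
  rw [hloga]
  ring
end

section
/- The function G(b) := (2/b)·arctan(b) + (2·√(1+b²)/b)·log(b + √(1+b²)) − ((2+b²)/b²)·log(1+b²) is decreasing on (0,∞). -/
open Real Set

noncomputable def sfun (x : ℝ) : ℝ := Real.sqrt (1 + x^2)

lemma sfun_pos (x : ℝ) : 0 < sfun x := Real.sqrt_pos.mpr (by positivity)

lemma sfun_sq (x : ℝ) : (sfun x)^2 = 1 + x^2 := Real.sq_sqrt (by positivity)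

lemma sfun_ge_one (x : ℝ) : 1 ≤ sfun x := by
  rw [show (1:ℝ) = Real.sqrt 1 by simp [sfun]]
  exact Real.sqrt_le_sqrt (by nlinarith)

lemma sfun_gt_one {x : ℝ} (hx : 0 < x) : 1 < sfun x := by
  have h := sfun_sq x
  nlinarith [sfun_pos x, sfun_ge_one x]

lemma hasDerivAt_sfun (x : ℝ) : HasDerivAt sfun (x / sfun x) x := by
  have h1 : HasDerivAt (fun t : ℝ => 1 + t^2) (2*x) x := by
    simpa using (hasDerivAt_pow 2 x).const_add 1
  have h2 := (Real.hasDerivAt_sqrt (x := 1 + x^2) (by positivity)).comp x h1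
  refine h2.congr_deriv (Eq.symm ?_)
  have := sfun_pos x
  field_simp [sfun]
  ring
  rfl

noncomputable def Lfun (x : ℝ) : ℝ := Real.log (x + sfun x)

lemma Lfun_zero : Lfun 0 = 0 := by simp [Lfun, sfun]

lemma add_sfun_pos (x : ℝ) : 0 < x + sfun x := by
  rcases le_or_gt 0 x with h | h
  · linarith [sfun_pos x]
  · have h2 := sfun_sq x
    nlinarith [sfun_pos x]

lemma hasDerivAt_Lfun (x : ℝ) : HasDerivAt Lfun (1 / sfun x) x := by
  have h := ((hasDerivAt_id x).add (hasDerivAt_sfun x)).log (add_sfun_pos x).ne'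
  refine h.congr_deriv (Eq.symm ?_)
  have h1 := sfun_pos x
  have h2 := add_sfun_pos x
  simp only [Pi.add_apply, id]
  field_simp
  ring

lemma hasDerivAt_shafer_atan (x : ℝ) :
    HasDerivAt (fun t : ℝ => Real.arctan t - 3*t/(1+2*sfun t))
      (1/(1+x^2) - (3*(1+2*sfun x) - 3*x*(2*(x/sfun x)))/(1+2*sfun x)^2) x := by
  have hs := sfun_pos x
  have hden : (1 + 2*sfun x) ≠ 0 := by linarith
  have h1 : HasDerivAt (fun t : ℝ => 3*t) 3 x := by simpa using (hasDerivAt_id x).const_mul 3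
  have h2 : HasDerivAt (fun t : ℝ => 1 + 2*sfun t) (2*(x/sfun x)) x := by
    simpa using ((hasDerivAt_sfun x).const_mul 2).const_add 1
  exact (Real.hasDerivAt_arctan x).sub (h1.div h2 hden)

lemma shafer_atan {x : ℝ} (hx : 0 ≤ x) : 3*x/(1+2*sfun x) ≤ Real.arctan x := by
  have mono : MonotoneOn (fun t : ℝ => Real.arctan t - 3*t/(1+2*sfun t)) (Ici 0) := by
    apply monotoneOn_of_deriv_nonneg (convex_Ici 0)
    · exact fun z _ => ((hasDerivAt_shafer_atan z).continuousAt).continuousWithinAt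
    · intro z _
      exact ((hasDerivAt_shafer_atan z).differentiableAt).differentiableWithinAt
    · intro z _
      rw [(hasDerivAt_shafer_atan z).deriv]
      set s := sfun z with hsdef
      have hs : 0 < s := sfun_pos z
      have hs1 : 1 ≤ s := sfun_ge_one z
      have hsq : s^2 = 1 + z^2 := sfun_sq z
      have e1 : (1:ℝ) + z^2 = s^2 := hsq.symm
      have e2 : 3*z*(2*(z/s)) = 6*s - 6/s := by
        field_simp
        linear_combination (-6)*hsq
      have e3 : 3*(1+2*s) - (6*s - 6/s) = (3*s+6)/s := by
        field_simp
        ring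
      rw [e1, e2, e3, div_div, sub_nonneg,
        div_le_div_iff₀ (mul_pos hs (pow_pos (by linarith) 2)) (pow_pos (by linarith : (0:ℝ) < s) 2)]
      nlinarith [mul_nonneg hs.le (sq_nonneg (s-1))]
  have h := mono self_mem_Ici hx hx
  simp only [Real.arctan_zero, mul_zero, zero_div, sub_zero] at h
  linarith [h]

lemma hasDerivAt_shafer_L (x : ℝ) :
    HasDerivAt (fun t : ℝ => Lfun t - 3*t/(2+sfun t))
      (1/sfun x - (3*(2+sfun x) - 3*x*(x/sfun x))/(2+sfun x)^2) x := by
  have hs := sfun_pos x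
  have hden : (2 + sfun x) ≠ 0 := by linarith
  have h1 : HasDerivAt (fun t : ℝ => 3*t) 3 x := by simpa using (hasDerivAt_id x).const_mul 3
  have h2 : HasDerivAt (fun t : ℝ => 2 + sfun t) (x/sfun x) x := by
    simpa using (hasDerivAt_sfun x).const_add 2
  exact (hasDerivAt_Lfun x).sub (h1.div h2 hden)

lemma shafer_L {x : ℝ} (hx : 0 ≤ x) : 3*x/(2+sfun x) ≤ Lfun x := by
  have mono : MonotoneOn (fun t : ℝ => Lfun t - 3*t/(2+sfun t)) (Ici 0) := by
    apply monotoneOn_of_deriv_nonneg (convex_Ici 0)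
    · exact fun z _ => ((hasDerivAt_shafer_L z).continuousAt).continuousWithinAt
    · intro z _
      exact ((hasDerivAt_shafer_L z).differentiableAt).differentiableWithinAt
    · intro z _
      rw [(hasDerivAt_shafer_L z).deriv]
      set s := sfun z with hsdef
      have hs : 0 < s := sfun_pos z
      have hs1 : 1 ≤ s := sfun_ge_one z
      have hsq : s^2 = 1 + z^2 := sfun_sq z
      have e2 : 3*z*(z/s) = 3*s - 3/s := by
        field_simp
        linear_combination (-1)*hsq
      have e3 : 3*(2+s) - (3*s - 3/s) = (6*s+3)/s := by
        field_simp
        ring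
      rw [e2, e3, div_div, sub_nonneg,
        div_le_div_iff₀ (mul_pos hs (pow_pos (by linarith) 2)) (by linarith : (0:ℝ) < s)]
      nlinarith [mul_nonneg hs.le (sq_nonneg (s-1))]
  have h := mono self_mem_Ici hx hx
  simp only [Lfun_zero, mul_zero, zero_div, sub_zero] at h
  linarith [h]

noncomputable def Kfun (x : ℝ) : ℝ :=
  x * Real.arctan x + x * Lfun x / sfun x - 2 * Real.log (1 + x^2)

lemma Kfun_zero : Kfun 0 = 0 := by simp [Kfun, Lfun, sfun]

lemma hasDerivAt_Kfun (x : ℝ) :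
    HasDerivAt Kfun (Real.arctan x + Lfun x/(sfun x)^3 - 2*x/(1+x^2)) x := by
  have hs := sfun_pos x
  have hsq := sfun_sq x
  have h1 : HasDerivAt (fun t : ℝ => t * Real.arctan t)
      (1 * Real.arctan x + x * (1/(1+x^2))) x :=
    (hasDerivAt_id x).mul (Real.hasDerivAt_arctan x)
  have h2 : HasDerivAt (fun t : ℝ => t * Lfun t / sfun t)
      (((1 * Lfun x + x * (1/sfun x)) * sfun x - x * Lfun x * (x/sfun x))/(sfun x)^2) x :=
    ((hasDerivAt_id x).mul (hasDerivAt_Lfun x)).div (hasDerivAt_sfun x) hs.ne'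
  have hinner : HasDerivAt (fun t : ℝ => 1 + t^2) (2*x) x := by
    simpa using (hasDerivAt_pow 2 x).const_add 1
  have h3 : HasDerivAt (fun t : ℝ => 2 * Real.log (1+t^2)) (2*(2*x/(1+x^2))) x :=
    (hinner.log (by positivity)).const_mul 2
  have h := (h1.add h2).sub h3
  have key : ((1 * Lfun x + x * (1/sfun x)) * sfun x - x * Lfun x * (x/sfun x))/(sfun x)^2
      = Lfun x/(sfun x)^3 + x/(sfun x)^2 := by
    field_simp
    linear_combination (Lfun x) * hsq
  refine h.congr_deriv (Eq.symm ?_)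
  rw [key, hsq]
  ring

lemma Kfun_deriv_pos {x : ℝ} (hx : 0 < x) :
    0 < Real.arctan x + Lfun x/(sfun x)^3 - 2*x/(1+x^2) := by
  set s := sfun x with hsdef
  have hs : 0 < s := sfun_pos x
  have hs1 : 1 < s := sfun_gt_one hx
  have hsq : s^2 = 1 + x^2 := sfun_sq x
  have hA : 3*x/(1+2*s) ≤ Real.arctan x := shafer_atan hx.le
  have hL : 3*x/(2+s) ≤ Lfun x := shafer_L hx.le
  have hL3 : 3*x/((2+s)*s^3) ≤ Lfun x/s^3 := by
    have h := (div_le_div_iff_of_pos_right (pow_pos hs 3)).mpr hL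
    rwa [div_div] at h
  have key : 2*x/(1+x^2) < 3*x/(1+2*s) + 3*x/((2+s)*s^3) := by
    rw [← hsq, div_add_div _ _ (by linarith : (1:ℝ)+2*s ≠ 0).symm.symm
        (mul_pos (by linarith : (0:ℝ) < 2+s) (pow_pos hs 3)).ne',
      div_lt_div_iff₀ (pow_pos hs 2)
        (mul_pos (by linarith : (0:ℝ) < 1+2*s) (mul_pos (by linarith : (0:ℝ) < 2+s) (pow_pos hs 3)))]
    have fact : (3*x*((2+s)*s^3) + (1+2*s)*(3*x))*s^2 - 2*x*((1+2*s)*((2+s)*s^3))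
        = x*s^2*(s-1)^2*(3*s^2+8*s+3) := by ring
    nlinarith [mul_pos (mul_pos (mul_pos hx (pow_pos hs 2)) (pow_pos (by linarith : (0:ℝ) < s - 1) 2)) (by nlinarith : (0:ℝ) < 3*s^2+8*s+3)]
  linarith

lemma Kfun_pos {x : ℝ} (hx : 0 < x) : 0 < Kfun x := by
  have mono : StrictMonoOn Kfun (Ici 0) := by
    apply strictMonoOn_of_deriv_pos (convex_Ici 0)
    · exact fun z _ => ((hasDerivAt_Kfun z).continuousAt).continuousWithinAt
    · intro z hz
      rw [interior_Ici] at hz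
      rw [(hasDerivAt_Kfun z).deriv]
      exact Kfun_deriv_pos hz
  have h := mono self_mem_Ici (le_of_lt hx : (0:ℝ) ≤ x) hx
  rwa [Kfun_zero] at h

lemma hasDerivAt_G {b : ℝ} (hb : 0 < b) :
    HasDerivAt (fun t : ℝ =>
      (2/t) * Real.arctan t
        + (2 * Real.sqrt (1 + t^2) / t) * Real.log (t + Real.sqrt (1 + t^2))
        - ((2 + t^2)/t^2) * Real.log (1 + t^2)) (-2*Kfun b/b^3) b := by
  have hs : 0 < sfun b := sfun_pos b
  have hsq : (sfun b)^2 = 1 + b^2 := sfun_sq b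
  have hbne : b ≠ 0 := hb.ne'
  have hA : HasDerivAt (fun t : ℝ => 2/t) (2 * -((b^2)⁻¹)) b := by
    simpa [div_eq_mul_inv] using (hasDerivAt_inv hbne).const_mul 2
  have h1 : HasDerivAt (fun t : ℝ => 2/t * Real.arctan t)
      ((2 * -((b^2)⁻¹)) * Real.arctan b + (2/b) * (1/(1+b^2))) b :=
    hA.mul (Real.hasDerivAt_arctan b)
  have hq : HasDerivAt (fun t : ℝ => 2 * sfun t / t) (-(2/(sfun b * b^2))) b := by
    have h := ((hasDerivAt_sfun b).const_mul 2).div (hasDerivAt_id b) hbne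
    refine h.congr_deriv (Eq.symm ?_)
    simp only [id]
    field_simp
    linear_combination hsq
  have h2 : HasDerivAt (fun t : ℝ => (2 * sfun t / t) * Lfun t)
      ((-(2/(sfun b * b^2))) * Lfun b + (2 * sfun b / b) * (1/sfun b)) b :=
    hq.mul (hasDerivAt_Lfun b)
  have hnum : HasDerivAt (fun t : ℝ => 2 + t^2) (2*b) b := by
    simpa using (hasDerivAt_pow 2 b).const_add 2
  have hden : HasDerivAt (fun t : ℝ => t^2) (2*b) b := by
    simpa using hasDerivAt_pow 2 b
  have hq2 : HasDerivAt (fun t : ℝ => (2+t^2)/t^2) (-(4/b^3)) b := by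
    have h := hnum.div hden (pow_ne_zero 2 hbne)
    refine h.congr_deriv (Eq.symm ?_)
    field_simp
    ring
  have hinner : HasDerivAt (fun t : ℝ => 1 + t^2) (2*b) b := by
    simpa using (hasDerivAt_pow 2 b).const_add 1
  have hlog : HasDerivAt (fun t : ℝ => Real.log (1+t^2)) (2*b/(1+b^2)) b :=
    hinner.log (by positivity)
  have h3 : HasDerivAt (fun t : ℝ => ((2+t^2)/t^2) * Real.log (1+t^2))
      ((-(4/b^3)) * Real.log (1+b^2) + ((2+b^2)/b^2) * (2*b/(1+b^2))) b :=
    hq2.mul hlog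
  have h := (h1.add h2).sub h3
  have hfun : (fun t : ℝ =>
      (2/t) * Real.arctan t
        + (2 * Real.sqrt (1 + t^2) / t) * Real.log (t + Real.sqrt (1 + t^2))
        - ((2 + t^2)/t^2) * Real.log (1 + t^2)) =
      (fun t : ℝ => 2/t * Real.arctan t + (2 * sfun t / t) * Lfun t
        - ((2+t^2)/t^2) * Real.log (1+t^2)) := rfl
  rw [hfun]
  refine h.congr_deriv (Eq.symm ?_)
  unfold Kfun
  field_simp
  ring

theorem stmt_15 :
    StrictAntiOn (fun b : ℝ =>
      (2/b) * Real.arctan b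
        + (2 * Real.sqrt (1 + b^2) / b) * Real.log (b + Real.sqrt (1 + b^2))
        - ((2 + b^2)/b^2) * Real.log (1 + b^2)) (Set.Ioi (0:ℝ)) := by
  apply strictAntiOn_of_deriv_neg (convex_Ioi 0)
  · exact fun b hb => ((hasDerivAt_G hb).continuousAt).continuousWithinAt
  · intro b hb
    rw [interior_Ioi] at hb
    rw [(hasDerivAt_G hb).deriv]
    apply div_neg_of_neg_of_pos
    · linarith [Kfun_pos hb]
    · exact pow_pos hb 3
end

section
/- For every b > 0, the quantity g(b) := −arctan(b) − log(b + √(1+b²))/√(1+b²) + (2/b)·log(1+b²) is negative. -/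
open Real Set

noncomputable def Kf (x : ℝ) : ℝ :=
  -2 * Real.arctan x + x / (1 + x^2) + Real.arsinh x / (Real.sqrt (1 + x^2))^3

noncomputable def Hf (x : ℝ) : ℝ :=
  -((1 + x^2) * Real.arctan x) + 2 * x - Real.arsinh x / Real.sqrt (1 + x^2)

noncomputable def Ff (x : ℝ) : ℝ :=
  -(x * Real.arctan x) - x * Real.arsinh x / Real.sqrt (1 + x^2) + 2 * Real.log (1 + x^2)

lemma sqrt_deriv (x : ℝ) :
    HasDerivAt (fun y : ℝ => Real.sqrt (1 + y^2)) (x / Real.sqrt (1 + x^2)) x := by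
  have h0 : (0:ℝ) < 1 + x^2 := by positivity
  have hq : HasDerivAt (fun y : ℝ => 1 + y^2) (2*x) x := by
    simpa using (hasDerivAt_pow 2 x).const_add 1
  have := (Real.hasDerivAt_sqrt h0.ne').comp x hq
  refine this.congr_deriv ?_
  have hs0 : 0 < Real.sqrt (1 + x^2) := Real.sqrt_pos.2 h0
  ring

lemma K_deriv (x : ℝ) :
    HasDerivAt Kf
      (-(3*x^2) / (Real.sqrt (1 + x^2))^4
        - 3 * x * Real.arsinh x / (Real.sqrt (1 + x^2))^5) x := by
  have h0 : (0:ℝ) < 1 + x^2 := by positivity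
  set s := Real.sqrt (1 + x^2) with hsdef
  have hs0 : 0 < s := Real.sqrt_pos.2 h0
  have hs2 : s^2 = 1 + x^2 := Real.sq_sqrt h0.le
  have hq : HasDerivAt (fun y : ℝ => 1 + y^2) (2*x) x := by
    simpa using (hasDerivAt_pow 2 x).const_add 1
  have h1 : HasDerivAt (fun y : ℝ => -2 * Real.arctan y) (-2 * (1/(1+x^2))) x :=
    (Real.hasDerivAt_arctan x).const_mul (-2)
  have h2 : HasDerivAt (fun y : ℝ => y / (1 + y^2))
      ((1 * (1 + x^2) - x * (2*x)) / (1 + x^2)^2) x :=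
    (hasDerivAt_id x).div hq h0.ne'
  have h3c : HasDerivAt (fun y : ℝ => (Real.sqrt (1 + y^2))^3) (3 * s^2 * (x/s)) x := by
    have := (sqrt_deriv x).fun_pow 3
    refine this.congr_deriv ?_
    norm_num
    ring
  have h3 : HasDerivAt (fun y : ℝ => Real.arsinh y / (Real.sqrt (1 + y^2))^3)
      (((Real.sqrt (1 + x^2))⁻¹ * s^3 - Real.arsinh x * (3 * s^2 * (x/s))) / (s^3)^2) x :=
    (Real.hasDerivAt_arsinh x).div h3c (by positivity)
  have hK : HasDerivAt Kf _ x := (h1.add h2).add h3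
  convert hK using 1
  rw [← hs2, Real.sqrt_sq hs0.le]
  field_simp
  try linear_combination s * hs2

lemma K_neg {x : ℝ} (hx : 0 < x) : Kf x < 0 := by
  have hanti : StrictAntiOn Kf (Set.Ici (0:ℝ)) := by
    apply strictAntiOn_of_deriv_neg (convex_Ici 0)
      (fun y _ => (K_deriv y).differentiableAt.continuousAt.continuousWithinAt)
    intro y hy
    rw [interior_Ici] at hy
    rw [(K_deriv y).deriv]
    have h0 : (0:ℝ) < 1 + y^2 := by positivity
    have hs0 : 0 < Real.sqrt (1 + y^2) := Real.sqrt_pos.2 h0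
    have hy0 : (0:ℝ) < y := hy
    have ha : 0 < Real.arsinh y := Real.arsinh_pos_iff.2 hy0
    have t1 : 0 < 3*y^2 / (Real.sqrt (1 + y^2))^4 :=
      div_pos (by nlinarith) (by positivity)
    have t2 : 0 < 3 * y * Real.arsinh y / (Real.sqrt (1 + y^2))^5 :=
      div_pos (mul_pos (by linarith) ha) (pow_pos hs0 5)
    rw [neg_div]
    linarith
  have := hanti (Set.mem_Ici.2 le_rfl) hx.le hx
  simpa [Kf] using this

lemma H_deriv (x : ℝ) : HasDerivAt Hf (x * Kf x) x := by
  have h0 : (0:ℝ) < 1 + x^2 := by positivity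
  set s := Real.sqrt (1 + x^2) with hsdef
  have hs0 : 0 < s := Real.sqrt_pos.2 h0
  have hs2 : s^2 = 1 + x^2 := Real.sq_sqrt h0.le
  have hq : HasDerivAt (fun y : ℝ => 1 + y^2) (2*x) x := by
    simpa using (hasDerivAt_pow 2 x).const_add 1
  have h1 : HasDerivAt (fun y : ℝ => -((1 + y^2) * Real.arctan y))
      (-(2*x * Real.arctan x + (1 + x^2) * (1/(1+x^2)))) x :=
    (hq.mul (Real.hasDerivAt_arctan x)).neg
  have h2 : HasDerivAt (fun y : ℝ => 2 * y) 2 x := by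
    simpa using (hasDerivAt_id x).const_mul 2
  have h3 : HasDerivAt (fun y : ℝ => Real.arsinh y / Real.sqrt (1 + y^2))
      (((Real.sqrt (1 + x^2))⁻¹ * s - Real.arsinh x * (x/s)) / s^2) x :=
    (Real.hasDerivAt_arsinh x).div (sqrt_deriv x) hs0.ne'
  have hH : HasDerivAt Hf _ x := (h1.add h2).sub h3
  convert hH using 1
  rw [Kf, ← hs2, Real.sqrt_sq hs0.le]
  field_simp
  linear_combination (-s) * hs2

lemma H_neg {x : ℝ} (hx : 0 < x) : Hf x < 0 := by
  have hanti : StrictAntiOn Hf (Set.Ici (0:ℝ)) := by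
    apply strictAntiOn_of_deriv_neg (convex_Ici 0)
      (fun y _ => (H_deriv y).differentiableAt.continuousAt.continuousWithinAt)
    intro y hy
    rw [interior_Ici] at hy
    rw [(H_deriv y).deriv]
    exact mul_neg_of_pos_of_neg hy (K_neg hy)
  have := hanti (Set.mem_Ici.2 le_rfl) hx.le hx
  simpa [Hf] using this

lemma F_deriv (x : ℝ) : HasDerivAt Ff (Hf x / (1 + x^2)) x := by
  have h0 : (0:ℝ) < 1 + x^2 := by positivity
  set s := Real.sqrt (1 + x^2) with hsdef
  have hs0 : 0 < s := Real.sqrt_pos.2 h0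
  have hs2 : s^2 = 1 + x^2 := Real.sq_sqrt h0.le
  have hq : HasDerivAt (fun y : ℝ => 1 + y^2) (2*x) x := by
    simpa using (hasDerivAt_pow 2 x).const_add 1
  have h1 : HasDerivAt (fun y : ℝ => -(y * Real.arctan y))
      (-(1 * Real.arctan x + x * (1/(1+x^2)))) x :=
    ((hasDerivAt_id x).mul (Real.hasDerivAt_arctan x)).neg
  have hnum : HasDerivAt (fun y : ℝ => y * Real.arsinh y)
      (1 * Real.arsinh x + x * (Real.sqrt (1 + x^2))⁻¹) x :=
    (hasDerivAt_id x).mul (Real.hasDerivAt_arsinh x)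
  have h2 : HasDerivAt (fun y : ℝ => y * Real.arsinh y / Real.sqrt (1 + y^2))
      (((1 * Real.arsinh x + x * (Real.sqrt (1 + x^2))⁻¹) * s
        - x * Real.arsinh x * (x/s)) / s^2) x :=
    hnum.div (sqrt_deriv x) hs0.ne'
  have h3 : HasDerivAt (fun y : ℝ => 2 * Real.log (1 + y^2)) (2 * ((2*x) / (1+x^2))) x := by
    exact ((hq.log h0.ne').const_mul 2)
  have hF : HasDerivAt Ff _ x := (h1.sub h2).add h3
  convert hF using 1
  rw [Hf, ← hs2, Real.sqrt_sq hs0.le]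
  field_simp
  linear_combination Real.arsinh x * hs2

lemma F_neg {x : ℝ} (hx : 0 < x) : Ff x < 0 := by
  have hanti : StrictAntiOn Ff (Set.Ici (0:ℝ)) := by
    apply strictAntiOn_of_deriv_neg (convex_Ici 0)
      (fun y _ => (F_deriv y).differentiableAt.continuousAt.continuousWithinAt)
    intro y hy
    rw [interior_Ici] at hy
    rw [(F_deriv y).deriv]
    have h0 : (0:ℝ) < 1 + y^2 := by positivity
    exact div_neg_of_neg_of_pos (H_neg hy) h0
  have := hanti (Set.mem_Ici.2 le_rfl) hx.le hx
  simpa [Ff] using this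

theorem stmt_16 (b : ℝ) (hb : 0 < b) :
    -Real.arctan b - Real.log (b + Real.sqrt (1 + b^2)) / Real.sqrt (1 + b^2)
      + (2/b) * Real.log (1 + b^2) < 0 := by
  have hF : Ff b < 0 := F_neg hb
  have h0 : (0:ℝ) < 1 + b^2 := by positivity
  have hs0 : 0 < Real.sqrt (1 + b^2) := Real.sqrt_pos.2 h0
  have key : -Real.arctan b - Real.log (b + Real.sqrt (1 + b^2)) / Real.sqrt (1 + b^2)
      + (2/b) * Real.log (1 + b^2) = Ff b / b := by
    rw [show Real.log (b + Real.sqrt (1 + b^2)) = Real.arsinh b from rfl, Ff]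
    field_simp
  rw [key]
  exact div_neg_of_neg_of_pos hF hb
end

section
/- For every c > 0, the quantity h(c) := 2c/(1+c) + (c/(1+c))^{3/2}·log(√c + √(1+c)) − 2·log(1+c) is negative. -/
open Real

noncomputable def gFun : ℝ → ℝ := fun u =>
  4 * Real.log (Real.cosh u) - 2 * ((Real.sinh u)^2 / (Real.cosh u)^2)
    - u * (Real.sinh u)^3 / (Real.cosh u)^3

lemma gFun_hasDerivAt (u : ℝ) :
    HasDerivAt gFun
      (3 * (Real.sinh u)^2 * (Real.sinh u * Real.cosh u - u) / (Real.cosh u)^4) u := by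
  have hc := Real.hasDerivAt_cosh u
  have hs := Real.hasDerivAt_sinh u
  have hcne : Real.cosh u ≠ 0 := (Real.cosh_pos u).ne'
  have t1 : HasDerivAt (fun u => Real.log (Real.cosh u)) (Real.sinh u / Real.cosh u) u :=
    hc.log hcne
  have t2 : HasDerivAt (fun u => (Real.sinh u)^2 / (Real.cosh u)^2)
      ((2 * Real.sinh u ^ 1 * Real.cosh u * (Real.cosh u)^2
        - (Real.sinh u)^2 * (2 * Real.cosh u ^ 1 * Real.sinh u)) / ((Real.cosh u)^2)^2) u :=
    (hs.pow 2).div (hc.pow 2) (pow_ne_zero _ hcne)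
  have t3 : HasDerivAt (fun u => u * (Real.sinh u)^3 / (Real.cosh u)^3)
      (((1 * (Real.sinh u)^3 + u * (3 * Real.sinh u ^ 2 * Real.cosh u)) * (Real.cosh u)^3
        - u * (Real.sinh u)^3 * (3 * Real.cosh u ^ 2 * Real.sinh u)) / ((Real.cosh u)^3)^2) u :=
    ((hasDerivAt_id u).mul (hs.pow 3)).div (hc.pow 3) (pow_ne_zero _ hcne)
  have := ((t1.const_mul 4).sub (t2.const_mul 2)).sub t3
  refine HasDerivAt.congr_deriv this ?_
  have h1 : Real.cosh u ^ 2 = 1 + Real.sinh u ^ 2 := Real.cosh_sq' u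
  field_simp
  linear_combination (-3*u*Real.sinh u^2) * h1

lemma gFun_pos {u : ℝ} (hu : 0 < u) : 0 < gFun u := by
  have hmono : StrictMonoOn gFun (Set.Ici (0:ℝ)) := by
    apply strictMonoOn_of_deriv_pos (convex_Ici 0)
    · exact (Differentiable.continuous (fun x => (gFun_hasDerivAt x).differentiableAt)).continuousOn
    · intro x hx
      rw [interior_Ici] at hx
      rw [(gFun_hasDerivAt x).deriv]
      have hsx : 0 < Real.sinh x := Real.sinh_pos_iff.mpr hx
      have hcx : 0 < Real.cosh x := Real.cosh_pos x
      have hlt : x < Real.sinh x * Real.cosh x := by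
        have hx' : (0:ℝ) < x := hx
        have h2 : 2 * x < Real.sinh (2 * x) := by
          rw [Real.self_lt_sinh_iff]; linarith
        rw [Real.sinh_two_mul] at h2
        linarith
      have hpos : 0 < Real.sinh x * Real.cosh x - x := by linarith
      positivity
  have h0 : gFun 0 = 0 := by simp [gFun]
  have := hmono (Set.self_mem_Ici) (Set.mem_Ici.mpr hu.le) hu
  rwa [h0] at this

theorem stmt_17 (c : ℝ) (hc : 0 < c) :
    2*c/(1 + c) + (c/(1 + c)) ^ ((3:ℝ)/2) * Real.log (Real.sqrt c + Real.sqrt (1 + c))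
      - 2 * Real.log (1 + c) < 0 := by
  set u := Real.arsinh (Real.sqrt c) with hu
  have hupos : 0 < u := Real.arsinh_pos_iff.mpr (Real.sqrt_pos.mpr hc)
  have hs : Real.sinh u = Real.sqrt c := Real.sinh_arsinh _
  have hsq : Real.sqrt c ^ 2 = c := Real.sq_sqrt hc.le
  have hcosh : Real.cosh u = Real.sqrt (1 + c) := by
    rw [hu, Real.cosh_arsinh, hsq]
  have hlog : Real.log (Real.sqrt c + Real.sqrt (1 + c)) = u := by
    rw [hu, Real.arsinh, hsq]
  have hcpos : (0:ℝ) < Real.cosh u := Real.cosh_pos u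
  have h1c : 1 + c = (Real.cosh u)^2 := by
    rw [hcosh, Real.sq_sqrt (by linarith)]
  have hcc : c = (Real.sinh u)^2 := by rw [hs, hsq]
  have hfrac : c / (1 + c) = (Real.sinh u / Real.cosh u)^2 := by
    rw [h1c, hcc, div_pow]
  have ht : 0 ≤ Real.sinh u / Real.cosh u := by
    have := Real.sinh_pos_iff.mpr hupos
    positivity
  have hrpow : (c/(1 + c)) ^ ((3:ℝ)/2) = (Real.sinh u / Real.cosh u)^3 := by
    rw [hfrac, ← Real.rpow_natCast (Real.sinh u / Real.cosh u) 2,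
      ← Real.rpow_mul ht, ← Real.rpow_natCast (Real.sinh u / Real.cosh u) 3]
    norm_num
  have hlog2 : Real.log (1 + c) = 2 * Real.log (Real.cosh u) := by
    rw [h1c, Real.log_pow]
    push_cast; ring
  have hkey := gFun_pos hupos
  rw [hrpow, hlog, hlog2]
  unfold gFun at hkey
  have h2c : 2*c/(1 + c) = 2 * (Real.sinh u / Real.cosh u)^2 := by
    rw [mul_div_assoc, hfrac]
  rw [h2c]
  have he1 : 2 * (Real.sinh u / Real.cosh u)^2 = 2 * (Real.sinh u ^2 / Real.cosh u ^2) := by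
    rw [div_pow]
  have he2 : (Real.sinh u / Real.cosh u)^3 * u = u * (Real.sinh u)^3 / (Real.cosh u)^3 := by
    rw [div_pow]; ring
  rw [he1, he2]
  linarith
end
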